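/- arXiv:1702.02405 — 9 statements merged into one kernel-verified Lean document; each statement's English description precedes it below -/
import Mathlib

section
/- Let O be a consecutive matching in E that contains no run of ℓ+1 consecutive edges (i.e., every streak of O has at most ℓ edges), where ℓ ≥ 1, and let s ⊆ E be a run of ℓ consecutive edges. Then the number of edges of O that overlap some edge of s is at most 2ℓ + 2. -/
/-- Two edges `(i,j)` and `(i',j')` of the bipartite graph overlap if
`|i - i'| ≤ 1` or `|j - j'| ≤ 1`. -/
def Overlap {n : ℕ} (e e' : Fin n × Fin n) : Prop :=
  ((e.1.val : ℤ) - e'.1.val).natAbs ≤ 1 ∨ ((e.2.val : ℤ) - e'.2.val).natAbs ≤ 1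

instance {n : ℕ} (e e' : Fin n × Fin n) : Decidable (Overlap e e') := by
  unfold Overlap; infer_instance

/-- `M` is a consecutive matching in `E`. -/
def ConsecMatching {n : ℕ} (E M : Finset (Fin n × Fin n)) : Prop :=
  M ⊆ E ∧
  (∀ e ∈ M, ∀ e' ∈ M, e ≠ e' → e.1 ≠ e'.1 ∧ e.2 ≠ e'.2) ∧
  (∀ e ∈ M, ∀ e' ∈ M, e'.1.val = e.1.val + 1 → e'.2.val = e.2.val + 1) ∧
  (∀ e ∈ M, ∀ e' ∈ M, e'.2.val = e.2.val + 1 → e'.1.val = e.1.val + 1)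

/-- `s` is the run of `ℓ` consecutive edges at `(p, q)`,
i.e. `s = {(p+r, q+r) : 0 ≤ r < ℓ}`. -/
def IsRunAt {n : ℕ} (s : Finset (Fin n × Fin n)) (p q ℓ : ℕ) : Prop :=
  p + ℓ ≤ n ∧ q + ℓ ≤ n ∧
  ∀ e : Fin n × Fin n, e ∈ s ↔ ∃ r < ℓ, e.1.val = p + r ∧ e.2.val = q + r

/-- `s` is a run of `ℓ` consecutive edges. -/
def IsRun {n : ℕ} (s : Finset (Fin n × Fin n)) (ℓ : ℕ) : Prop :=
  ∃ p q, IsRunAt s p q ℓ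

/-- `E` contains no run of `k` consecutive edges. -/
def NoRun {n : ℕ} (E : Finset (Fin n × Fin n)) (k : ℕ) : Prop :=
  ¬ ∃ s : Finset (Fin n × Fin n), IsRun s k ∧ s ⊆ E

/-- `s` is a streak of `M`: a run of (at least one) consecutive edges contained in `M`,
maximal under inclusion among runs contained in `M`. -/
def IsStreak {n : ℕ} (M s : Finset (Fin n × Fin n)) : Prop :=
  (∃ ℓ, 1 ≤ ℓ ∧ IsRun s ℓ) ∧ s ⊆ M ∧
  ∀ s' ℓ', IsRun s' ℓ' → s' ⊆ M → s ⊆ s' → s' = s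

/-- `s 0, …, s (m-1)` is a greedy sequence in `E` with threshold `k`:
each `s i` is a run of at least `k` consecutive edges, all of whose edges
overlap no edge of the previously chosen runs, and no run of consecutive
edges all still available at step `i` is longer than `s i`. -/
def GreedySeq {n : ℕ} (E : Finset (Fin n × Fin n)) (k m : ℕ)
    (s : ℕ → Finset (Fin n × Fin n)) : Prop :=
  ∀ i < m,
    s i ⊆ E.filter (fun e => ∀ j < i, ∀ e' ∈ s j, ¬ Overlap e e') ∧
    (∃ ℓ, k ≤ ℓ ∧ IsRun (s i) ℓ) ∧
    (∀ r ℓ, IsRun r ℓ →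
      r ⊆ E.filter (fun e => ∀ j < i, ∀ e' ∈ s j, ¬ Overlap e e') →
      ℓ ≤ (s i).card)

/-- `M` is a `t`-locally-optimal consecutive matching in `E`. -/
def LocallyOptimal {n : ℕ} (E M : Finset (Fin n × Fin n)) (t : ℕ) : Prop :=
  ConsecMatching E M ∧
  ¬ ∃ Erem Eadd : Finset (Fin n × Fin n), Erem ⊆ M ∧ Eadd ⊆ E \ M ∧
      Erem.card < Eadd.card ∧ Eadd.card ≤ t ∧
      ConsecMatching E ((M \ Erem) ∪ Eadd)

lemma run_of_cover {n : ℕ} (O : Finset (Fin n × Fin n))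
    (h3 : ∀ e ∈ O, ∀ e' ∈ O, e'.1.val = e.1.val + 1 → e'.2.val = e.2.val + 1)
    (a k : ℕ)
    (hcov : ∀ v, a ≤ v → v ≤ a + k → ∃ e ∈ O, e.1.val = v) :
    ∃ s : Finset (Fin n × Fin n), IsRun s (k+1) ∧ s ⊆ O := by
  obtain ⟨e0, he0O, he0⟩ := hcov a le_rfl (Nat.le_add_right _ _)
  set b := e0.2.val with hb
  have claim : ∀ r ≤ k, ∃ e ∈ O, e.1.val = a + r ∧ e.2.val = b + r := by
    intro r hr
    induction r with
    | zero => exact ⟨e0, he0O, by omega, by omega⟩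
    | succ r ih =>
      obtain ⟨e, heO, he1, he2⟩ := ih (by omega)
      obtain ⟨e', he'O, he'1⟩ := hcov (a + r + 1) (by omega) (by omega)
      refine ⟨e', he'O, by omega, ?_⟩
      have := h3 e heO e' he'O (by omega)
      omega
  obtain ⟨etop, hetopO, h1top, h2top⟩ := claim k le_rfl
  refine ⟨Finset.univ.filter (fun e => ∃ r < k+1, e.1.val = a + r ∧ e.2.val = b + r),
    ⟨a, b, ?_, ?_, ?_⟩, ?_⟩
  · have := etop.1.isLt; omega
  · have := etop.2.isLt; omega
  · intro e; simp [Finset.mem_filter]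
  · intro e he
    simp only [Finset.mem_filter, Finset.mem_univ, true_and] at he
    obtain ⟨r, hr, h1, h2⟩ := he
    obtain ⟨e', he'O, h1', h2'⟩ := claim r (by omega)
    have : e = e' := Prod.ext (Fin.ext (by omega)) (Fin.ext (by omega))
    rw [this]; exact he'O

lemma run_of_cover' {n : ℕ} (O : Finset (Fin n × Fin n))
    (h4 : ∀ e ∈ O, ∀ e' ∈ O, e'.2.val = e.2.val + 1 → e'.1.val = e.1.val + 1)
    (a k : ℕ)
    (hcov : ∀ v, a ≤ v → v ≤ a + k → ∃ e ∈ O, e.2.val = v) :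
    ∃ s : Finset (Fin n × Fin n), IsRun s (k+1) ∧ s ⊆ O := by
  obtain ⟨e0, he0O, he0⟩ := hcov a le_rfl (Nat.le_add_right _ _)
  set b := e0.1.val with hb
  have claim : ∀ r ≤ k, ∃ e ∈ O, e.1.val = b + r ∧ e.2.val = a + r := by
    intro r hr
    induction r with
    | zero => exact ⟨e0, he0O, by omega, by omega⟩
    | succ r ih =>
      obtain ⟨e, heO, he1, he2⟩ := ih (by omega)
      obtain ⟨e', he'O, he'1⟩ := hcov (a + r + 1) (by omega) (by omega)
      refine ⟨e', he'O, ?_, by omega⟩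
      have := h4 e heO e' he'O (by omega)
      omega
  obtain ⟨etop, hetopO, h1top, h2top⟩ := claim k le_rfl
  refine ⟨Finset.univ.filter (fun e => ∃ r < k+1, e.1.val = b + r ∧ e.2.val = a + r),
    ⟨b, a, ?_, ?_, ?_⟩, ?_⟩
  · have := etop.1.isLt; omega
  · have := etop.2.isLt; omega
  · intro e; simp [Finset.mem_filter]
  · intro e he
    simp only [Finset.mem_filter, Finset.mem_univ, true_and] at he
    obtain ⟨r, hr, h1, h2⟩ := he
    obtain ⟨e', he'O, h1', h2'⟩ := claim r (by omega)
    have : e = e' := Prod.ext (Fin.ext (by omega)) (Fin.ext (by omega))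
    rw [this]; exact he'O

/-- if the consecutive matching `O` in `E` contains no run of `ℓ+1`
consecutive edges and `s ⊆ E` is a run of `ℓ` consecutive edges, then at most
`2ℓ + 2` edges of `O` overlap some edge of `s`. -/
theorem greedy_step_bound {n : ℕ} (hn : 1 ≤ n) (E O s : Finset (Fin n × Fin n))
    (ℓ : ℕ) (hℓ : 1 ≤ ℓ)
    (hO : ConsecMatching E O) (hnorun : NoRun O (ℓ + 1))
    (hs : IsRun s ℓ) (hsE : s ⊆ E) :
    (O.filter (fun e => ∃ e' ∈ s, Overlap e e')).card ≤ 2 * ℓ + 2 := by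
  obtain ⟨hOE, hm, h3, h4⟩ := hO
  obtain ⟨p, q, hp, hq, hmem⟩ := hs
  set FA := O.filter (fun e => p ≤ e.1.val + 1 ∧ e.1.val ≤ p + ℓ) with hFA
  set FB := O.filter (fun e => q ≤ e.2.val + 1 ∧ e.2.val ≤ q + ℓ) with hFB
  have hsub : O.filter (fun e => ∃ e' ∈ s, Overlap e e') ⊆ FA ∪ FB := by
    intro e he
    simp only [Finset.mem_filter] at he
    obtain ⟨heO, e', he's, hov⟩ := he
    rw [hmem] at he's
    obtain ⟨r, hr, h1, h2⟩ := he's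
    simp only [Finset.mem_union, hFA, hFB, Finset.mem_filter]
    rcases hov with h | h
    · left; exact ⟨heO, by omega, by omega⟩
    · right; exact ⟨heO, by omega, by omega⟩
  have hFAcard : FA.card ≤ ℓ + 1 := by
    by_contra hc
    push_neg at hc
    have hinj : Set.InjOn (fun e : Fin n × Fin n => e.1.val) FA := by
      intro e he e' he' hee
      by_contra hne
      exact (hm e (Finset.mem_of_mem_filter e he) e'
        (Finset.mem_of_mem_filter e' he') hne).1 (Fin.ext hee)
    have himg : FA.image (fun e => e.1.val) ⊆ Finset.Icc (p - 1) (p + ℓ) := by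
      intro v hv
      simp only [Finset.mem_image] at hv
      obtain ⟨e, he, rfl⟩ := hv
      simp only [hFA, Finset.mem_filter] at he
      simp only [Finset.mem_Icc]; omega
    have hcardimg : (FA.image (fun e => e.1.val)).card = FA.card :=
      Finset.card_image_of_injOn hinj
    have hIcc : (Finset.Icc (p-1) (p+ℓ)).card = p + ℓ + 1 - (p-1) := Nat.card_Icc _ _
    have hp1 : 1 ≤ p := by
      by_contra hp0
      have := Finset.card_le_card himg
      omega
    have heq : FA.image (fun e => e.1.val) = Finset.Icc (p-1) (p+ℓ) :=
      Finset.eq_of_subset_of_card_le himg (by omega)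
    have hcov : ∀ v, p - 1 ≤ v → v ≤ (p-1) + ℓ → ∃ e ∈ O, e.1.val = v := by
      intro v hv1 hv2
      have hvm : v ∈ Finset.Icc (p-1) (p+ℓ) := by
        simp only [Finset.mem_Icc]; omega
      rw [← heq] at hvm
      simp only [Finset.mem_image] at hvm
      obtain ⟨e, he, hev⟩ := hvm
      exact ⟨e, Finset.mem_of_mem_filter e he, hev⟩
    obtain ⟨s', hs', hs'O⟩ := run_of_cover O h3 (p-1) ℓ hcov
    exact hnorun ⟨s', hs', hs'O⟩
  have hFBcard : FB.card ≤ ℓ + 1 := by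
    by_contra hc
    push_neg at hc
    have hinj : Set.InjOn (fun e : Fin n × Fin n => e.2.val) FB := by
      intro e he e' he' hee
      by_contra hne
      exact (hm e (Finset.mem_of_mem_filter e he) e'
        (Finset.mem_of_mem_filter e' he') hne).2 (Fin.ext hee)
    have himg : FB.image (fun e => e.2.val) ⊆ Finset.Icc (q - 1) (q + ℓ) := by
      intro v hv
      simp only [Finset.mem_image] at hv
      obtain ⟨e, he, rfl⟩ := hv
      simp only [hFB, Finset.mem_filter] at he
      simp only [Finset.mem_Icc]; omega
    have hcardimg : (FB.image (fun e => e.2.val)).card = FB.card :=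
      Finset.card_image_of_injOn hinj
    have hIcc : (Finset.Icc (q-1) (q+ℓ)).card = q + ℓ + 1 - (q-1) := Nat.card_Icc _ _
    have hq1 : 1 ≤ q := by
      by_contra hq0
      have := Finset.card_le_card himg
      omega
    have heq : FB.image (fun e => e.2.val) = Finset.Icc (q-1) (q+ℓ) :=
      Finset.eq_of_subset_of_card_le himg (by omega)
    have hcov : ∀ v, q - 1 ≤ v → v ≤ (q-1) + ℓ → ∃ e ∈ O, e.2.val = v := by
      intro v hv1 hv2
      have hvm : v ∈ Finset.Icc (q-1) (q+ℓ) := by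
        simp only [Finset.mem_Icc]; omega
      rw [← heq] at hvm
      simp only [Finset.mem_image] at hvm
      obtain ⟨e, he, hev⟩ := hvm
      exact ⟨e, Finset.mem_of_mem_filter e he, hev⟩
    obtain ⟨s', hs', hs'O⟩ := run_of_cover' O h4 (q-1) ℓ hcov
    exact hnorun ⟨s', hs', hs'O⟩
  calc (O.filter (fun e => ∃ e' ∈ s, Overlap e e')).card
      ≤ (FA ∪ FB).card := Finset.card_le_card hsub
    _ ≤ FA.card + FB.card := Finset.card_union_le _ _
    _ ≤ 2 * ℓ + 2 := by omega
end

section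
/- Let O be a consecutive matching in E that contains no run of ℓ+1 consecutive edges, where ℓ ≥ 1, and let I be a set of at most ℓ+2 consecutive indices on side A. Then the number of edges (i,j) ∈ O with i ∈ I is at most ℓ + 1. -/
/-- if the consecutive matching `O` in `E` contains no run of `ℓ+1`
consecutive edges and `I` is a set of at most `ℓ+2` consecutive indices on side A,
then at most `ℓ + 1` edges of `O` have their A-endpoint in `I`. -/
theorem side_window_bound {n : ℕ} (hn : 1 ≤ n) (E O : Finset (Fin n × Fin n))
    (ℓ : ℕ) (hℓ : 1 ≤ ℓ)
    (hO : ConsecMatching E O) (hnorun : NoRun O (ℓ + 1))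
    (I : Finset (Fin n)) (a w : ℕ) (hw : w ≤ ℓ + 2)
    (hI : ∀ v : Fin n, v ∈ I ↔ a ≤ v.val ∧ v.val < a + w) :
    (O.filter (fun e => e.1 ∈ I)).card ≤ ℓ + 1 := by
  haveI : NeZero n := ⟨by omega⟩
  by_contra hcon
  push_neg at hcon
  set F := O.filter (fun e => e.1 ∈ I) with hF
  have hinj : Set.InjOn Prod.fst (F : Set (Fin n × Fin n)) := by
    intro e he e' he' h
    by_contra hne
    exact (hO.2.1 e (Finset.mem_filter.mp he).1 e' (Finset.mem_filter.mp he').1 hne).1 h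
  have hcard1 : F.card = (F.image Prod.fst).card := (Finset.card_image_of_injOn hinj).symm
  have hsubI : F.image Prod.fst ⊆ I := by
    intro v hv
    obtain ⟨e, he, rfl⟩ := Finset.mem_image.mp hv
    exact (Finset.mem_filter.mp he).2
  have hIval : I.image Fin.val ⊆ Finset.Ico a (a + w) := by
    intro x hx
    obtain ⟨v, hv, rfl⟩ := Finset.mem_image.mp hx
    have := (hI v).mp hv
    simp only [Finset.mem_Ico]; omega
  have hIcard : I.card ≤ w := by
    have h1 : (I.image Fin.val).card = I.card :=
      Finset.card_image_of_injective _ Fin.val_injective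
    calc I.card = (I.image Fin.val).card := h1.symm
      _ ≤ (Finset.Ico a (a + w)).card := Finset.card_le_card hIval
      _ = w := by simp
  have hle : F.card ≤ I.card := hcard1 ▸ Finset.card_le_card hsubI
  have hIvaleq : I.image Fin.val = Finset.Ico a (a + w) := by
    apply Finset.eq_of_subset_of_card_le hIval
    rw [Finset.card_image_of_injective _ Fin.val_injective]
    simp; omega
  have hFeq : F.image Prod.fst = I := Finset.eq_of_subset_of_card_le hsubI (by omega)
  have hex : ∀ r, r < ℓ + 2 → ∃ e, e ∈ O ∧ e.1.val = a + r := by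
    intro r hr
    have hmem : a + r ∈ I.image Fin.val := by
      rw [hIvaleq]; simp only [Finset.mem_Ico]; omega
    obtain ⟨v, hv, hval⟩ := Finset.mem_image.mp hmem
    rw [← hFeq] at hv
    obtain ⟨e, he, rfl⟩ := Finset.mem_image.mp hv
    exact ⟨e, (Finset.mem_filter.mp he).1, hval⟩
  choose! f hfO hf1 using hex
  have hstep : ∀ r, r + 1 < ℓ + 2 → (f (r + 1)).2.val = (f r).2.val + 1 := by
    intro r hr
    exact hO.2.2.1 (f r) (hfO r (by omega)) (f (r + 1)) (hfO (r + 1) hr)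
      (by rw [hf1 (r + 1) hr, hf1 r (by omega)]; omega)
  have h2 : ∀ r, r < ℓ + 2 → (f r).2.val = (f 0).2.val + r := by
    intro r
    induction r with
    | zero => intro _; simp
    | succ k ih => intro hk; rw [hstep k hk, ih (by omega)]; omega
  set q := (f 0).2.val with hq
  have hqn : q + (ℓ + 1) ≤ n := by
    have h1 := h2 (ℓ + 1) (by omega)
    have h3 := (f (ℓ + 1)).2.isLt
    omega
  have han : a + (ℓ + 1) ≤ n := by
    have h1 := hf1 (ℓ + 1) (by omega)
    have h3 := (f (ℓ + 1)).1.isLt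
    omega
  apply hnorun
  refine ⟨(Finset.range (ℓ + 1)).image f, ⟨a, q, han, hqn, ?_⟩, ?_⟩
  · intro e
    constructor
    · intro he
      obtain ⟨r, hr, rfl⟩ := Finset.mem_image.mp he
      rw [Finset.mem_range] at hr
      exact ⟨r, hr, hf1 r (by omega), h2 r (by omega)⟩
    · rintro ⟨r, hr, h1, h2'⟩
      apply Finset.mem_image.mpr
      refine ⟨r, Finset.mem_range.mpr hr, ?_⟩
      have e1 : (f r).1 = e.1 := Fin.ext (by rw [hf1 r (by omega), h1])
      have e2 : (f r).2 = e.2 := Fin.ext (by rw [h2 r (by omega), h2'])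
      exact Prod.ext e1 e2
  · intro e he
    obtain ⟨r, hr, rfl⟩ := Finset.mem_image.mp he
    rw [Finset.mem_range] at hr
    exact hfO r (by omega)
end

section
/- Let s_1, …, s_m form a greedy sequence in E with threshold k, where k ≥ 1, and let O be any consecutive matching in E. Then k times the number of edges of O that overlap some edge of s_1 ∪ … ∪ s_m is at most (2k + 2) · (|s_1| + … + |s_m|); equivalently, the number of such edges of O is at most (2 + 2/k) · (|s_1| + … + |s_m|). -/
section Aux

variable {n : ℕ}

lemma runAt_card {s : Finset (Fin n × Fin n)} {p q ℓ : ℕ}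
    (h : IsRunAt s p q ℓ) : s.card = ℓ := by
  obtain ⟨hp, hq, hmem⟩ := h
  have himg : s.image (fun e => e.1.val) = Finset.Ico p (p + ℓ) := by
    ext a
    simp only [Finset.mem_image, Finset.mem_Ico]
    constructor
    · rintro ⟨e, he, rfl⟩
      obtain ⟨r, hr, h1, h2⟩ := (hmem e).1 he
      omega
    · rintro ⟨h1, h2⟩
      exact ⟨(⟨a, by omega⟩, ⟨q + (a - p), by omega⟩),
        (hmem _).2 ⟨a - p, by omega, by simp; omega, rfl⟩, rfl⟩
  have hinj : Set.InjOn (fun e : Fin n × Fin n => e.1.val) (s : Set (Fin n × Fin n)) := by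
    intro e he e' he' hee
    obtain ⟨r, hr, h1, h2⟩ := (hmem e).1 he
    obtain ⟨r', hr', h1', h2'⟩ := (hmem e').1 he'
    simp only at hee
    have hrr : r = r' := by omega
    apply Prod.ext <;> apply Fin.ext <;> omega
  calc s.card = (s.image (fun e => e.1.val)).card :=
        (Finset.card_image_of_injOn hinj).symm
    _ = ℓ := by rw [himg, Nat.card_Ico]; omega

lemma mem_image_swap {Y : Finset (Fin n × Fin n)} {e : Fin n × Fin n} :
    e ∈ Y.image Prod.swap ↔ e.swap ∈ Y := by
  simp only [Finset.mem_image]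
  constructor
  · rintro ⟨a, ha, rfl⟩; simpa using ha
  · intro h; exact ⟨e.swap, h, by simp⟩

lemma runAt_swap {s : Finset (Fin n × Fin n)} {p q ℓ : ℕ}
    (h : IsRunAt s p q ℓ) : IsRunAt (s.image Prod.swap) q p ℓ := by
  obtain ⟨hp, hq, hmem⟩ := h
  refine ⟨hq, hp, fun e => ?_⟩
  rw [mem_image_swap, hmem]
  constructor
  · rintro ⟨r, hr, h1, h2⟩; exact ⟨r, hr, h2, h1⟩
  · rintro ⟨r, hr, h1, h2⟩; exact ⟨r, hr, h2, h1⟩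

lemma window_bound {Ei Y : Finset (Fin n × Fin n)} {p ℓ : ℕ}
    (hYE : Y ⊆ Ei)
    (hwin : ∀ e ∈ Y, p ≤ e.1.val + 1 ∧ e.1.val ≤ p + ℓ)
    (hdist : ∀ e ∈ Y, ∀ e' ∈ Y, e ≠ e' → e.1 ≠ e'.1)
    (hcons : ∀ e ∈ Y, ∀ e' ∈ Y, e'.1.val = e.1.val + 1 → e'.2.val = e.2.val + 1)
    (hrun : ∀ r ℓ', IsRun r ℓ' → r ⊆ Ei → ℓ' ≤ ℓ) :
    Y.card ≤ ℓ + 1 := by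
  by_contra hcard
  push_neg at hcard
  have hinj : Set.InjOn (fun e : Fin n × Fin n => e.1.val) (Y : Set (Fin n × Fin n)) := by
    intro e he e' he' h
    by_contra hne
    exact hdist e he e' he' hne (Fin.ext h)
  have hYimg : Y.card = (Y.image (fun e => e.1.val)).card :=
    (Finset.card_image_of_injOn hinj).symm
  have himgsub : Y.image (fun e => e.1.val) ⊆ Finset.Icc (p - 1) (p + ℓ) := by
    intro a ha
    obtain ⟨e, he, rfl⟩ := Finset.mem_image.1 ha
    have := hwin e he
    simp only [Finset.mem_Icc]
    omega
  have hIcc : (Finset.Icc (p - 1) (p + ℓ)).card = p + ℓ + 1 - (p - 1) :=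
    Nat.card_Icc _ _
  have hle : Y.card ≤ p + ℓ + 1 - (p - 1) := by
    rw [hYimg, ← hIcc]; exact Finset.card_le_card himgsub
  have hp1 : 1 ≤ p := by omega
  have hYcard : Y.card = ℓ + 2 := by omega
  have himg : Y.image (fun e => e.1.val) = Finset.Icc (p - 1) (p + ℓ) := by
    apply Finset.eq_of_subset_of_card_le himgsub
    rw [← hYimg]; omega
  have hsurj : ∀ t ≤ ℓ + 1, ∃ e ∈ Y, e.1.val = p - 1 + t := by
    intro t ht
    have : p - 1 + t ∈ Y.image (fun e => e.1.val) := by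
      rw [himg, Finset.mem_Icc]; omega
    obtain ⟨e, he, hev⟩ := Finset.mem_image.1 this
    exact ⟨e, he, hev⟩
  obtain ⟨e0, he0, he0v⟩ := hsurj 0 (by omega)
  have hstep : ∀ t, t ≤ ℓ + 1 → ∀ e ∈ Y, e.1.val = p - 1 + t →
      e.2.val = e0.2.val + t := by
    intro t
    induction t with
    | zero =>
      intro _ e he h1
      have : e = e0 := by
        by_contra hne
        exact hdist e he e0 he0 hne (Fin.ext (by omega))
      rw [this]
      omega
    | succ t ih =>
      intro ht e he h1
      obtain ⟨e', he', he'v⟩ := hsurj t (by omega)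
      have h2 := ih (by omega) e' he' he'v
      have h3 := hcons e' he' e he (by omega)
      omega
  obtain ⟨etop, hetop, hetopv⟩ := hsurj (ℓ + 1) le_rfl
  have htop2 := hstep (ℓ + 1) le_rfl etop hetop hetopv
  have hbn : e0.2.val + (ℓ + 2) ≤ n := by
    have := etop.2.isLt; omega
  have hpn : (p - 1) + (ℓ + 2) ≤ n := by
    have := etop.1.isLt; omega
  have hYrun : IsRunAt Y (p - 1) e0.2.val (ℓ + 2) := by
    refine ⟨hpn, hbn, fun e => ⟨?_, ?_⟩⟩
    · intro he
      have hw := hwin e he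
      refine ⟨e.1.val - (p - 1), by omega, by omega, ?_⟩
      have := hstep (e.1.val - (p - 1)) (by omega) e he (by omega)
      omega
    · rintro ⟨r, hr, h1, h2⟩
      obtain ⟨e', he', he'v⟩ := hsurj r (by omega)
      have h2' := hstep r (by omega) e' he' he'v
      have : e = e' := by apply Prod.ext <;> apply Fin.ext <;> omega
      rw [this]; exact he'
  have := hrun Y (ℓ + 2) ⟨_, _, hYrun⟩ hYE
  omega

lemma window_bound2 {Ei Y : Finset (Fin n × Fin n)} {q ℓ : ℕ}
    (hYE : Y ⊆ Ei)
    (hwin : ∀ e ∈ Y, q ≤ e.2.val + 1 ∧ e.2.val ≤ q + ℓ)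
    (hdist : ∀ e ∈ Y, ∀ e' ∈ Y, e ≠ e' → e.2 ≠ e'.2)
    (hcons : ∀ e ∈ Y, ∀ e' ∈ Y, e'.2.val = e.2.val + 1 → e'.1.val = e.1.val + 1)
    (hrun : ∀ r ℓ', IsRun r ℓ' → r ⊆ Ei → ℓ' ≤ ℓ) :
    Y.card ≤ ℓ + 1 := by
  have hswapinj : Function.Injective (Prod.swap : Fin n × Fin n → Fin n × Fin n) :=
    Prod.swap_injective
  have hmain : (Y.image Prod.swap).card ≤ ℓ + 1 := by
    apply window_bound (Ei := Ei.image Prod.swap) (p := q)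
    · intro e he
      rw [mem_image_swap] at he ⊢
      exact hYE he
    · intro e he
      rw [mem_image_swap] at he
      exact hwin e.swap he
    · intro e he e' he' hne
      rw [mem_image_swap] at he he'
      intro h
      exact (hdist e.swap he e'.swap he' (fun hc => hne (by
        have := congrArg Prod.swap hc; simpa using this))) h
    · intro e he e' he' h
      rw [mem_image_swap] at he he'
      exact hcons e.swap he e'.swap he' h
    · rintro r ℓ' ⟨p', q', hr⟩ hrsub
      apply hrun (r.image Prod.swap) ℓ' ⟨q', p', runAt_swap hr⟩
      intro x hx
      rw [mem_image_swap] at hx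
      have := hrsub hx
      rw [mem_image_swap] at this
      simpa using this
  rwa [Finset.card_image_of_injective _ hswapinj] at hmain

end Aux

/-- for a greedy sequence `s 0, …, s (m-1)` in `E` with threshold `k`
and any consecutive matching `O` in `E`, the number of edges of `O` overlapping
some edge of `⋃ᵢ s i` is at most `(2 + 2/k)` times `∑ᵢ |s i|`. -/
theorem greedy_ratio {n : ℕ} (hn : 1 ≤ n) (E : Finset (Fin n × Fin n))
    (k m : ℕ) (hk : 1 ≤ k)
    (s : ℕ → Finset (Fin n × Fin n)) (hgreedy : GreedySeq E k m s)
    (O : Finset (Fin n × Fin n)) (hO : ConsecMatching E O) :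
    k * (O.filter (fun e => ∃ i < m, ∃ e' ∈ s i, Overlap e e')).card
      ≤ (2 * k + 2) * ∑ i ∈ Finset.range m, (s i).card := by
  classical
  obtain ⟨hOE, hOdist, hOc1, hOc2⟩ := hO
  set X := O.filter (fun e => ∃ i < m, ∃ e' ∈ s i, Overlap e e') with hXdef
  set Xi : ℕ → Finset (Fin n × Fin n) := fun i =>
    X.filter (fun e => (∃ e' ∈ s i, Overlap e e') ∧
      ∀ j < i, ∀ e' ∈ s j, ¬ Overlap e e') with hXidef
  have hcover : X ⊆ (Finset.range m).biUnion Xi := by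
    intro e he
    have hex : ∃ i, i < m ∧ ∃ e' ∈ s i, Overlap e e' := by
      have := (Finset.mem_filter.1 he).2
      simpa using this
    rw [Finset.mem_biUnion]
    refine ⟨Nat.find hex, Finset.mem_range.2 (Nat.find_spec hex).1, ?_⟩
    rw [hXidef]
    refine Finset.mem_filter.2 ⟨he, (Nat.find_spec hex).2, ?_⟩
    intro j hj e' he' hov
    exact Nat.find_min hex hj ⟨(Nat.find_spec hex).1.trans_le' hj.le, e', he', hov⟩
  have hcard : X.card ≤ ∑ i ∈ Finset.range m, (Xi i).card :=
    le_trans (Finset.card_le_card hcover) Finset.card_biUnion_le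
  have hper : ∀ i < m, k * (Xi i).card ≤ (2 * k + 2) * (s i).card := by
    intro i him
    obtain ⟨hsub, ⟨ℓ, hkℓ, p, q, hrunAt⟩, hmax⟩ := hgreedy i him
    have hcardsi : (s i).card = ℓ := runAt_card hrunAt
    set Ei := E.filter (fun e => ∀ j < i, ∀ e' ∈ s j, ¬ Overlap e e') with hEidef
    have hXiO : Xi i ⊆ O := fun e he =>
      (Finset.mem_filter.1 (Finset.mem_filter.1 he).1).1
    have hXiEi : Xi i ⊆ Ei := by
      intro e he
      have h1 := Finset.mem_filter.1 he
      exact Finset.mem_filter.2 ⟨hOE (hXiO he), h1.2.2⟩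
    have hov : ∀ e ∈ Xi i,
        (p ≤ e.1.val + 1 ∧ e.1.val ≤ p + ℓ) ∨
        (q ≤ e.2.val + 1 ∧ e.2.val ≤ q + ℓ) := by
      intro e he
      obtain ⟨e', he', hov⟩ := (Finset.mem_filter.1 he).2.1
      obtain ⟨r, hr, h1, h2⟩ := (hrunAt.2.2 e').1 he'
      rcases hov with h | h
      · left; omega
      · right; omega
    set Y1 := (Xi i).filter (fun e => p ≤ e.1.val + 1 ∧ e.1.val ≤ p + ℓ) with hY1
    set Y2 := (Xi i).filter (fun e => ¬ (p ≤ e.1.val + 1 ∧ e.1.val ≤ p + ℓ)) with hY2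
    have hsplit : Y1.card + Y2.card = (Xi i).card :=
      Finset.card_filter_add_card_filter_not _
    have hrunbd : ∀ r ℓ', IsRun r ℓ' → r ⊆ Ei → ℓ' ≤ ℓ := by
      intro r ℓ' h1 h2
      have := hmax r ℓ' h1 h2
      omega
    have hb1 : Y1.card ≤ ℓ + 1 := by
      have hY1O : Y1 ⊆ O := fun e he => hXiO (Finset.mem_filter.1 he).1
      apply window_bound (Ei := Ei)
      · exact fun e he => hXiEi (Finset.mem_filter.1 he).1
      · exact fun e he => (Finset.mem_filter.1 he).2
      · exact fun e he e' he' hne => (hOdist e (hY1O he) e' (hY1O he') hne).1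
      · exact fun e he e' he' h => hOc1 e (hY1O he) e' (hY1O he') h
      · exact hrunbd
    have hb2 : Y2.card ≤ ℓ + 1 := by
      have hY2O : Y2 ⊆ O := fun e he => hXiO (Finset.mem_filter.1 he).1
      apply window_bound2 (Ei := Ei)
      · exact fun e he => hXiEi (Finset.mem_filter.1 he).1
      · intro e he
        have h1 := Finset.mem_filter.1 he
        rcases hov e h1.1 with h | h
        · exact absurd h h1.2
        · exact h
      · exact fun e he e' he' hne => (hOdist e (hY2O he) e' (hY2O he') hne).2
      · exact fun e he e' he' h => hOc2 e (hY2O he) e' (hY2O he') h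
      · exact hrunbd
    have hXic : (Xi i).card ≤ 2 * ℓ + 2 := by omega
    have hkℓ' : k ≤ ℓ := hkℓ
    calc k * (Xi i).card ≤ k * (2 * ℓ + 2) := Nat.mul_le_mul_left _ hXic
      _ ≤ (2 * k + 2) * ℓ := by nlinarith
      _ = (2 * k + 2) * (s i).card := by rw [hcardsi]
  calc k * X.card ≤ k * ∑ i ∈ Finset.range m, (Xi i).card :=
        Nat.mul_le_mul_left _ hcard
    _ = ∑ i ∈ Finset.range m, k * (Xi i).card := Finset.mul_sum _ _ _
    _ ≤ ∑ i ∈ Finset.range m, (2 * k + 2) * (s i).card :=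
        Finset.sum_le_sum (fun i hi => hper i (Finset.mem_range.1 hi))
    _ = (2 * k + 2) * ∑ i ∈ Finset.range m, (s i).card := (Finset.mul_sum _ _ _).symm
end

section
/- Let M be a consecutive matching in E and let (i,j) and (i',j') be two distinct edges of M that overlap. Then |i − i'| = 1 and, as integers, j' − j = i' − i. In particular, any two distinct overlapping edges of a consecutive matching are consecutive edges of a common run. -/
/-- two distinct overlapping edges of a consecutive matching satisfy
`|i - i'| = 1` and `j' - j = i' - i` (as integers), i.e. they are consecutive
edges of a common run. -/
theorem overlapping_edges_consecutive {n : ℕ} (hn : 1 ≤ n)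
    (E M : Finset (Fin n × Fin n)) (hM : ConsecMatching E M)
    (e e' : Fin n × Fin n) (he : e ∈ M) (he' : e' ∈ M) (hne : e ≠ e')
    (hov : Overlap e e') :
    ((e.1.val : ℤ) - e'.1.val).natAbs = 1 ∧
    (e'.2.val : ℤ) - e.2.val = (e'.1.val : ℤ) - e.1.val := by
  obtain ⟨-, hdis, hstep, hstep'⟩ := hM
  obtain ⟨h1, h2⟩ := hdis e he e' he' hne
  have h1v : e.1.val ≠ e'.1.val := fun h => h1 (Fin.val_injective h)
  have h2v : e.2.val ≠ e'.2.val := fun h => h2 (Fin.val_injective h)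
  have key : e'.1.val = e.1.val + 1 ∨ e.1.val = e'.1.val + 1 := by
    rcases hov with h | h
    · omega
    · have : e'.2.val = e.2.val + 1 ∨ e.2.val = e'.2.val + 1 := by omega
      rcases this with h' | h'
      · exact Or.inl (hstep' e he e' he' h')
      · exact Or.inr (hstep' e' he' e he h')
  rcases key with h | h
  · have := hstep e he e' he' h; omega
  · have := hstep e' he' e he h; omega
end

section
/- Every consecutive matching M in E can be partitioned, in a unique way, into runs of consecutive edges such that any two distinct parts of the partition do not overlap (no edge of one part overlaps an edge of another part). -/
section Aux

variable {n : ℕ}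

/-- The decomposition property. -/
def Decomp (M : Finset (Fin n × Fin n)) (P : Finset (Finset (Fin n × Fin n))) : Prop :=
  (∀ t ∈ P, ∃ ℓ, 1 ≤ ℓ ∧ IsRun t ℓ) ∧
  P.biUnion id = M ∧
  (∀ t ∈ P, ∀ t' ∈ P, t ≠ t' → ∀ e ∈ t, ∀ e' ∈ t', ¬ Overlap e e')

lemma overlap_symm {e e' : Fin n × Fin n} (h : Overlap e e') : Overlap e' e := by
  unfold Overlap at *; omega

lemma consec_subset {E M M' : Finset (Fin n × Fin n)} (hM : ConsecMatching E M)
    (h : M' ⊆ M) : ConsecMatching E M' := by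
  obtain ⟨h1, h2, h3, h4⟩ := hM
  exact ⟨h.trans h1, fun e he e' he' => h2 e (h he) e' (h he'),
    fun e he e' he' => h3 e (h he) e' (h he'),
    fun e he e' he' => h4 e (h he) e' (h he')⟩

lemma overlap_cases {E M : Finset (Fin n × Fin n)} (hM : ConsecMatching E M)
    {f g : Fin n × Fin n} (hf : f ∈ M) (hg : g ∈ M) (h : Overlap f g) :
    f = g ∨ (g.1.val = f.1.val + 1 ∧ g.2.val = f.2.val + 1) ∨
      (f.1.val = g.1.val + 1 ∧ f.2.val = g.2.val + 1) := by
  obtain ⟨-, hdist, h3, h4⟩ := hM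
  by_cases hfg : f = g
  · exact Or.inl hfg
  right
  have hd := hdist f hf g hg hfg
  have h1 : f.1.val ≠ g.1.val := fun h => hd.1 (Fin.ext h)
  have h2 : f.2.val ≠ g.2.val := fun h => hd.2 (Fin.ext h)
  rcases h with h | h
  · have : g.1.val = f.1.val + 1 ∨ f.1.val = g.1.val + 1 := by omega
    rcases this with h' | h'
    · exact Or.inl ⟨h', h3 f hf g hg h'⟩
    · exact Or.inr ⟨h', h3 g hg f hf h'⟩
  · have : g.2.val = f.2.val + 1 ∨ f.2.val = g.2.val + 1 := by omega
    rcases this with h' | h'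
    · exact Or.inl ⟨h4 f hf g hg h', h'⟩
    · exact Or.inr ⟨h4 g hg f hf h', h'⟩

/-- Key step: peel off the run starting at the edge of minimal first coordinate. -/
lemma key_run {E M : Finset (Fin n × Fin n)} (hM : ConsecMatching E M) (hne : M.Nonempty) :
    ∃ s L, 1 ≤ L ∧ IsRun s L ∧ s ⊆ M ∧ s.Nonempty ∧
      ∀ e ∈ s, ∀ e' ∈ M, e' ∉ s → ¬ Overlap e e' := by
  classical
  set p : ℕ := (M.image fun f => f.1.val).min' (hne.image _) with hp
  obtain ⟨e, heM, hep⟩ : ∃ e ∈ M, e.1.val = p := by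
    have := (M.image fun f => f.1.val).min'_mem (hne.image _)
    rw [Finset.mem_image] at this
    obtain ⟨e, he, he'⟩ := this
    exact ⟨e, he, he'⟩
  have hpmin : ∀ f ∈ M, p ≤ f.1.val := fun f hf =>
    Finset.min'_le _ _ (Finset.mem_image.2 ⟨f, hf, rfl⟩)
  set q : ℕ := e.2.val with hq
  have hQn : ¬ ∃ f ∈ M, f.1.val = p + n ∧ f.2.val = q + n := by
    rintro ⟨f, hf, h1, -⟩
    have := f.1.isLt; omega
  have hQ0 : ∃ f ∈ M, f.1.val = p + 0 ∧ f.2.val = q + 0 := ⟨e, heM, by omega, by omega⟩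
  set Q : ℕ → Prop := fun ℓ => ¬ ∃ f ∈ M, f.1.val = p + ℓ ∧ f.2.val = q + ℓ with hQdef
  have hQex : ∃ ℓ, Q ℓ := ⟨n, hQn⟩
  set L : ℕ := Nat.find hQex with hLdef
  have hQL : Q L := Nat.find_spec hQex
  have hQlt : ∀ m < L, ∃ f ∈ M, f.1.val = p + m ∧ f.2.val = q + m := by
    intro m hm
    have := Nat.find_min hQex hm
    simpa [hQdef] using this
  have hL1 : 1 ≤ L := by
    rcases Nat.eq_zero_or_pos L with h | h
    · exact absurd hQ0 (h ▸ hQL)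
    · exact h
  set s : Finset (Fin n × Fin n) :=
    M.filter (fun f => ∃ r < L, f.1.val = p + r ∧ f.2.val = q + r) with hs
  have hmem : ∀ f : Fin n × Fin n, f ∈ s ↔ ∃ r < L, f.1.val = p + r ∧ f.2.val = q + r := by
    intro f
    constructor
    · intro hf; exact (Finset.mem_filter.1 hf).2
    · rintro ⟨r, hr, h1, h2⟩
      obtain ⟨g, hg, hg1, hg2⟩ := hQlt r hr
      have : f = g := Prod.ext (Fin.ext (by omega)) (Fin.ext (by omega))
      subst this
      exact Finset.mem_filter.2 ⟨hg, r, hr, h1, h2⟩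
  have hsub : s ⊆ M := Finset.filter_subset _ _
  have hpn : p + L ≤ n := by
    obtain ⟨g, hg, h1, -⟩ := hQlt (L - 1) (by omega)
    have := g.1.isLt; omega
  have hqn : q + L ≤ n := by
    obtain ⟨g, hg, -, h2⟩ := hQlt (L - 1) (by omega)
    have := g.2.isLt; omega
  refine ⟨s, L, hL1, ⟨p, q, hpn, hqn, hmem⟩, hsub, ⟨e, (hmem e).2 ⟨0, by omega, by omega, by omega⟩⟩, ?_⟩
  intro f hf g hg hgs hov
  obtain ⟨r, hr, hf1, hf2⟩ := (hmem f).1 hf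
  rcases overlap_cases hM (hsub hf) hg hov with rfl | ⟨h1, h2⟩ | ⟨h1, h2⟩
  · exact hgs hf
  · -- g = f + (1,1)
    rcases Nat.lt_or_ge (r + 1) L with h | h
    · exact hgs ((hmem g).2 ⟨r + 1, h, by omega, by omega⟩)
    · have hrL : r + 1 = L := by omega
      exact hQL ⟨g, hg, by omega, by omega⟩
  · -- f = g + (1,1)
    have hple := hpmin g hg
    have hr1 : 1 ≤ r := by omega
    exact hgs ((hmem g).2 ⟨r - 1, by omega, by omega, by omega⟩)

lemma exists_decomp {E : Finset (Fin n × Fin n)} :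
    ∀ M : Finset (Fin n × Fin n), ConsecMatching E M → ∃ P, Decomp M P := by
  intro M
  induction M using Finset.strongInduction with
  | _ M ih =>
    intro hM
    rcases M.eq_empty_or_nonempty with rfl | hne
    · refine ⟨∅, ?_, ?_, ?_⟩ <;> simp
    obtain ⟨s, L, hL1, hrun, hsub, hsne, hsep⟩ := key_run hM hne
    have hM' : ConsecMatching E (M \ s) := consec_subset hM (Finset.sdiff_subset)
    obtain ⟨P', hP1, hP2, hP3⟩ := ih (M \ s) (Finset.sdiff_ssubset hsub hsne) hM'
    refine ⟨insert s P', ?_, ?_, ?_⟩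
    · intro t ht
      rcases Finset.mem_insert.1 ht with rfl | ht
      · exact ⟨L, hL1, hrun⟩
      · exact hP1 t ht
    · rw [Finset.biUnion_insert, hP2]
      simp only [id]
      rw [Finset.union_comm, Finset.sdiff_union_of_subset hsub]
    · intro t ht t' ht' htt' f hf g hg
      have hsubP' : ∀ u ∈ P', u ⊆ M \ s := by
        intro u hu x hx
        rw [← hP2]
        exact Finset.mem_biUnion.2 ⟨u, hu, hx⟩
      rcases Finset.mem_insert.1 ht with h1 | h1
      · rcases Finset.mem_insert.1 ht' with h2 | h2
        · exact absurd (h1.trans h2.symm) htt'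
        · have hg' := hsubP' t' h2 hg
          exact hsep f (h1 ▸ hf) g (Finset.mem_sdiff.1 hg').1 (Finset.mem_sdiff.1 hg').2
      · rcases Finset.mem_insert.1 ht' with h2 | h2
        · have hf' := hsubP' t h1 hf
          intro hov
          exact hsep g (h2 ▸ hg) f (Finset.mem_sdiff.1 hf').1 (Finset.mem_sdiff.1 hf').2
            (overlap_symm hov)
        · exact hP3 t h1 t' h2 htt' f hf g hg

lemma decomp_closure {M : Finset (Fin n × Fin n)} {P : Finset (Finset (Fin n × Fin n))}
    (hP : Decomp M P) {t : Finset (Fin n × Fin n)} (ht : t ∈ P)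
    {e e' : Fin n × Fin n} (he : e ∈ t) (he' : e' ∈ M) (hov : Overlap e e') : e' ∈ t := by
  obtain ⟨t', ht', he't'⟩ := Finset.mem_biUnion.1 (hP.2.1 ▸ he' : e' ∈ P.biUnion id)
  by_cases h : t' = t
  · exact h ▸ he't'
  · exact absurd hov (hP.2.2 t ht t' ht' (Ne.symm h) e he e' he't')

lemma run_subset_part {M : Finset (Fin n × Fin n)} {P : Finset (Finset (Fin n × Fin n))}
    (hP : Decomp M P) {t t' : Finset (Fin n × Fin n)} {p q ℓ : ℕ} (hℓ : 1 ≤ ℓ)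
    (hrun : IsRunAt t p q ℓ) (ht' : t' ∈ P) (htM : t ⊆ M)
    {e : Fin n × Fin n} (het : e ∈ t) (het' : e ∈ t') : t ⊆ t' := by
  obtain ⟨hpn, hqn, hmem⟩ := hrun
  have her : ∀ r (h : r < ℓ),
      (⟨⟨p + r, by omega⟩, ⟨q + r, by omega⟩⟩ : Fin n × Fin n) ∈ t := by
    intro r h
    exact (hmem _).2 ⟨r, h, rfl, rfl⟩
  set er : ∀ r, r < ℓ → Fin n × Fin n :=
    fun r h => (⟨⟨p + r, by omega⟩, ⟨q + r, by omega⟩⟩ : Fin n × Fin n) with herdef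
  have hstep : ∀ r (h : r + 1 < ℓ), (er r (by omega) ∈ t' ↔ er (r + 1) h ∈ t') := by
    intro r h
    have hov : Overlap (er r (by omega)) (er (r + 1) h) := by
      left; simp [herdef]
    constructor
    · intro hc
      exact decomp_closure hP ht' hc (htM (her (r + 1) h)) hov
    · intro hc
      exact decomp_closure hP ht' hc (htM (her r (by omega))) (overlap_symm hov)
  -- e is er r0 for some r0
  obtain ⟨r0, hr0, he1, he2⟩ := (hmem e).1 het
  have heq : e = er r0 hr0 := Prod.ext (Fin.ext he1) (Fin.ext he2)
  have hdown : ∀ r (h : r < ℓ), er r h ∈ t' → er 0 (by omega) ∈ t' := by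
    intro r
    induction r with
    | zero => intro h hr; exact hr
    | succ k ihk =>
      intro h hr
      exact ihk (by omega) ((hstep k h).2 hr)
  have h0 : er 0 (by omega) ∈ t' := hdown r0 hr0 (heq ▸ het')
  have hall : ∀ r (h : r < ℓ), er r h ∈ t' := by
    intro r
    induction r with
    | zero => intro h; exact h0
    | succ k ihk =>
      intro h
      exact (hstep k h).1 (ihk (by omega))
  intro f hf
  obtain ⟨r, hr, h1, h2⟩ := (hmem f).1 hf
  have : f = er r hr := Prod.ext (Fin.ext h1) (Fin.ext h2)
  rw [this]
  exact hall r hr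

lemma decomp_sub {M : Finset (Fin n × Fin n)} {P P' : Finset (Finset (Fin n × Fin n))}
    (hP : Decomp M P) (hP' : Decomp M P') : P ⊆ P' := by
  intro t ht
  obtain ⟨ℓ, hℓ, p, q, hrun⟩ := hP.1 t ht
  have htM : t ⊆ M := by
    intro x hx
    rw [← hP.2.1]
    exact Finset.mem_biUnion.2 ⟨t, ht, hx⟩
  have hpn := hrun.1
  have hqn := hrun.2.1
  have hne : t.Nonempty := by
    refine ⟨⟨⟨p, by omega⟩, ⟨q, by omega⟩⟩, ?_⟩
    · exact (hrun.2.2 _).2 ⟨0, by omega, by simp, by simp⟩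
  obtain ⟨e, het⟩ := hne
  obtain ⟨t', ht', het'⟩ := Finset.mem_biUnion.1 (hP'.2.1 ▸ htM het : e ∈ P'.biUnion id)
  have h1 : t ⊆ t' := run_subset_part hP' hℓ hrun ht' htM het het'
  obtain ⟨ℓ', hℓ', p', q', hrun'⟩ := hP'.1 t' ht'
  have ht'M : t' ⊆ M := by
    intro x hx
    rw [← hP'.2.1]
    exact Finset.mem_biUnion.2 ⟨t', ht', hx⟩
  have h2 : t' ⊆ t := run_subset_part hP hℓ' hrun' ht ht'M het' het
  rw [Finset.Subset.antisymm h1 h2]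
  exact ht'

end Aux

/-- every consecutive matching `M` in `E` can be uniquely partitioned
into runs of consecutive edges such that distinct parts do not overlap. -/
theorem unique_streak_decomposition {n : ℕ} (hn : 1 ≤ n)
    (E M : Finset (Fin n × Fin n)) (hM : ConsecMatching E M) :
    ∃! P : Finset (Finset (Fin n × Fin n)),
      (∀ t ∈ P, ∃ ℓ, 1 ≤ ℓ ∧ IsRun t ℓ) ∧
      P.biUnion id = M ∧
      (∀ t ∈ P, ∀ t' ∈ P, t ≠ t' → ∀ e ∈ t, ∀ e' ∈ t', ¬ Overlap e e') := by
  obtain ⟨P, hP⟩ := exists_decomp M hM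
  refine ⟨P, ⟨hP.1, hP.2.1, hP.2.2⟩, ?_⟩
  intro P' hP'
  have hP'' : Decomp M P' := ⟨hP'.1, hP'.2.1, hP'.2.2⟩
  exact Finset.Subset.antisymm (decomp_sub hP'' hP) (decomp_sub hP hP'')
end

section
/- Suppose E contains no run of 2 consecutive edges, and let M be a consecutive matching in E. Then for any two distinct edges (i,j) and (i',j') of M one has ⌊i/2⌋ ≠ ⌊i'/2⌋ and ⌊j/2⌋ ≠ ⌊j'/2⌋ (indices taken as natural numbers). Consequently, merging the nodes of each side into consecutive pairs maps M injectively onto a matching of the same cardinality in the merged bipartite graph. -/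

lemma no_succ_aux {n : ℕ} (E M : Finset (Fin n × Fin n)) (hE : NoRun E 2)
    (hM : ConsecMatching E M) (e e' : Fin n × Fin n) (he : e ∈ M) (he' : e' ∈ M)
    (h1 : e'.1.val = e.1.val + 1) : False := by
  have h2 : e'.2.val = e.2.val + 1 := hM.2.2.1 e he e' he' h1
  apply hE
  refine ⟨{e, e'}, ⟨e.1.val, e.2.val, ?_, ?_, ?_⟩, ?_⟩
  · have := e'.1.isLt; omega
  · have := e'.2.isLt; omega
  · intro x
    simp only [Finset.mem_insert, Finset.mem_singleton]
    constructor
    · rintro (rfl | rfl)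
      · exact ⟨0, by omega, by omega, by omega⟩
      · exact ⟨1, by omega, by omega, by omega⟩
    · rintro ⟨r, hr, hx1, hx2⟩
      interval_cases r
      · left; exact Prod.ext (Fin.ext (by omega)) (Fin.ext (by omega))
      · right; exact Prod.ext (Fin.ext (by omega)) (Fin.ext (by omega))
  · intro x hx
    simp only [Finset.mem_insert, Finset.mem_singleton] at hx
    rcases hx with rfl | rfl
    · exact hM.1 he
    · exact hM.1 he'

/-- if `E` contains no run of 2 consecutive edges, then distinct edges
of a consecutive matching `M` in `E` land in distinct merged pairs on both sides,
so merging nodes into consecutive pairs maps `M` injectively onto a matching of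
the same cardinality in the merged bipartite graph. -/
theorem merged_pairs_injective {n : ℕ} (hn : 1 ≤ n)
    (E M : Finset (Fin n × Fin n)) (hE : NoRun E 2) (hM : ConsecMatching E M) :
    (∀ e ∈ M, ∀ e' ∈ M, e ≠ e' →
      e.1.val / 2 ≠ e'.1.val / 2 ∧ e.2.val / 2 ≠ e'.2.val / 2) ∧
    (M.image (fun e => (e.1.val / 2, e.2.val / 2))).card = M.card := by
  have key : ∀ e ∈ M, ∀ e' ∈ M, e ≠ e' →
      e.1.val / 2 ≠ e'.1.val / 2 ∧ e.2.val / 2 ≠ e'.2.val / 2 := by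
    intro e he e' he' hne
    obtain ⟨h1, h2⟩ := hM.2.1 e he e' he' hne
    have hv1 : e.1.val ≠ e'.1.val := fun h => h1 (Fin.ext h)
    have hv2 : e.2.val ≠ e'.2.val := fun h => h2 (Fin.ext h)
    constructor
    · intro h
      have : e'.1.val = e.1.val + 1 ∨ e.1.val = e'.1.val + 1 := by omega
      rcases this with h' | h'
      · exact no_succ_aux E M hE hM e e' he he' h'
      · exact no_succ_aux E M hE hM e' e he' he h'
    · intro h
      have : e'.2.val = e.2.val + 1 ∨ e.2.val = e'.2.val + 1 := by omega
      rcases this with h' | h'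
      · exact no_succ_aux E M hE hM e e' he he' (hM.2.2.2 e he e' he' h')
      · exact no_succ_aux E M hE hM e' e he' he (hM.2.2.2 e' he' e he h')
  refine ⟨key, Finset.card_image_of_injOn ?_⟩
  intro e he e' he' h
  by_contra hne
  exact (key e he e' he' hne).1 (congrArg Prod.fst h)
end

section
/- Suppose E contains no run of 3 consecutive edges. Let O be a consecutive matching in E and let e ∈ E. Then at most 4 edges of O overlap e. -/
lemma run3_false {n : ℕ} (E O : Finset (Fin n × Fin n)) (hE : NoRun E 3) (hsub : O ⊆ E)
    (f₀ f₁ f₂ : Fin n × Fin n) (h₀ : f₀ ∈ O) (h₁ : f₁ ∈ O) (h₂ : f₂ ∈ O)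
    (e11 : f₁.1.val = f₀.1.val + 1) (e12 : f₁.2.val = f₀.2.val + 1)
    (e21 : f₂.1.val = f₀.1.val + 2) (e22 : f₂.2.val = f₀.2.val + 2) : False := by
  apply hE
  refine ⟨{f₀, f₁, f₂}, ⟨f₀.1.val, f₀.2.val, ?_, ?_, ?_⟩, ?_⟩
  · have := f₂.1.isLt; omega
  · have := f₂.2.isLt; omega
  · intro g
    constructor
    · intro hg
      simp only [Finset.mem_insert, Finset.mem_singleton] at hg
      rcases hg with rfl | rfl | rfl
      · exact ⟨0, by omega, by omega, by omega⟩
      · exact ⟨1, by omega, by omega, by omega⟩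
      · exact ⟨2, by omega, by omega, by omega⟩
    · rintro ⟨r, hr, hg1, hg2⟩
      simp only [Finset.mem_insert, Finset.mem_singleton]
      interval_cases r
      · left; exact Prod.ext (Fin.ext (by omega)) (Fin.ext (by omega))
      · right; left; exact Prod.ext (Fin.ext (by omega)) (Fin.ext (by omega))
      · right; right; exact Prod.ext (Fin.ext (by omega)) (Fin.ext (by omega))
  · intro g hg
    simp only [Finset.mem_insert, Finset.mem_singleton] at hg
    rcases hg with rfl | rfl | rfl <;> exact hsub ‹_›

lemma sideA_bound {n : ℕ} (E O : Finset (Fin n × Fin n)) (hE : NoRun E 3) (hsub : O ⊆ E)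
    (hinj : ∀ f ∈ O, ∀ g ∈ O, f ≠ g → f.1 ≠ g.1)
    (hcon : ∀ f ∈ O, ∀ g ∈ O, g.1.val = f.1.val + 1 → g.2.val = f.2.val + 1)
    (a : ℕ) :
    (O.filter (fun f => ((f.1.val : ℤ) - a).natAbs ≤ 1)).card ≤ 2 := by
  by_contra hc
  push_neg at hc
  set F := O.filter (fun f => ((f.1.val : ℤ) - a).natAbs ≤ 1) with hF
  have hFO : F ⊆ O := Finset.filter_subset _ _
  have hinjOn : Set.InjOn (fun f : Fin n × Fin n => (f.1.val : ℤ)) F := by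
    intro x hx y hy hxy
    by_contra hne
    exact hinj x (hFO hx) y (hFO hy) hne (Fin.ext (Nat.cast_injective hxy))
  have hsubI : F.image (fun f => (f.1.val : ℤ)) ⊆ Finset.Icc ((a:ℤ)-1) ((a:ℤ)+1) := by
    intro x hx
    simp only [Finset.mem_image] at hx
    obtain ⟨f, hf, rfl⟩ := hx
    have hnat : ((f.1.val : ℤ) - a).natAbs ≤ 1 := (Finset.mem_filter.1 hf).2
    simp only [Finset.mem_Icc]
    omega
  have hcard : (Finset.Icc ((a:ℤ)-1) ((a:ℤ)+1)).card = 3 := by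
    rw [Int.card_Icc]; omega
  have heq : F.image (fun f => (f.1.val : ℤ)) = Finset.Icc ((a:ℤ)-1) ((a:ℤ)+1) := by
    apply Finset.eq_of_subset_of_card_le hsubI
    rw [hcard, Finset.card_image_of_injOn hinjOn]
    omega
  have hmem : ∀ x : ℤ, x ∈ Finset.Icc ((a:ℤ)-1) ((a:ℤ)+1) →
      ∃ f ∈ F, (f.1.val : ℤ) = x := by
    intro x hx
    rw [← heq] at hx
    simpa using Finset.mem_image.1 hx
  obtain ⟨f₀, hf₀, hv₀⟩ := hmem ((a:ℤ)-1) (by simp [Finset.mem_Icc]; omega)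
  obtain ⟨f₁, hf₁, hv₁⟩ := hmem (a:ℤ) (by simp [Finset.mem_Icc])
  obtain ⟨f₂, hf₂, hv₂⟩ := hmem ((a:ℤ)+1) (by simp [Finset.mem_Icc]; omega)
  have h01 : f₁.1.val = f₀.1.val + 1 := by omega
  have h12 : f₂.1.val = f₁.1.val + 1 := by omega
  have e12 : f₁.2.val = f₀.2.val + 1 := hcon f₀ (hFO hf₀) f₁ (hFO hf₁) h01
  have e22' : f₂.2.val = f₁.2.val + 1 := hcon f₁ (hFO hf₁) f₂ (hFO hf₂) h12
  exact run3_false E O hE hsub f₀ f₁ f₂ (hFO hf₀) (hFO hf₁) (hFO hf₂)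
    h01 e12 (by omega) (by omega)

lemma sideB_bound {n : ℕ} (E O : Finset (Fin n × Fin n)) (hE : NoRun E 3) (hsub : O ⊆ E)
    (hinj : ∀ f ∈ O, ∀ g ∈ O, f ≠ g → f.2 ≠ g.2)
    (hcon : ∀ f ∈ O, ∀ g ∈ O, g.2.val = f.2.val + 1 → g.1.val = f.1.val + 1)
    (b : ℕ) :
    (O.filter (fun f => ((f.2.val : ℤ) - b).natAbs ≤ 1)).card ≤ 2 := by
  by_contra hc
  push_neg at hc
  set F := O.filter (fun f => ((f.2.val : ℤ) - b).natAbs ≤ 1) with hF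
  have hFO : F ⊆ O := Finset.filter_subset _ _
  have hinjOn : Set.InjOn (fun f : Fin n × Fin n => (f.2.val : ℤ)) F := by
    intro x hx y hy hxy
    by_contra hne
    exact hinj x (hFO hx) y (hFO hy) hne (Fin.ext (Nat.cast_injective hxy))
  have hsubI : F.image (fun f => (f.2.val : ℤ)) ⊆ Finset.Icc ((b:ℤ)-1) ((b:ℤ)+1) := by
    intro x hx
    simp only [Finset.mem_image] at hx
    obtain ⟨f, hf, rfl⟩ := hx
    have hnat : ((f.2.val : ℤ) - b).natAbs ≤ 1 := (Finset.mem_filter.1 hf).2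
    simp only [Finset.mem_Icc]
    omega
  have hcard : (Finset.Icc ((b:ℤ)-1) ((b:ℤ)+1)).card = 3 := by
    rw [Int.card_Icc]; omega
  have heq : F.image (fun f => (f.2.val : ℤ)) = Finset.Icc ((b:ℤ)-1) ((b:ℤ)+1) := by
    apply Finset.eq_of_subset_of_card_le hsubI
    rw [hcard, Finset.card_image_of_injOn hinjOn]
    omega
  have hmem : ∀ x : ℤ, x ∈ Finset.Icc ((b:ℤ)-1) ((b:ℤ)+1) →
      ∃ f ∈ F, (f.2.val : ℤ) = x := by
    intro x hx
    rw [← heq] at hx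
    simpa using Finset.mem_image.1 hx
  obtain ⟨f₀, hf₀, hv₀⟩ := hmem ((b:ℤ)-1) (by simp [Finset.mem_Icc]; omega)
  obtain ⟨f₁, hf₁, hv₁⟩ := hmem (b:ℤ) (by simp [Finset.mem_Icc])
  obtain ⟨f₂, hf₂, hv₂⟩ := hmem ((b:ℤ)+1) (by simp [Finset.mem_Icc]; omega)
  have h01 : f₁.2.val = f₀.2.val + 1 := by omega
  have h12 : f₂.2.val = f₁.2.val + 1 := by omega
  have e11 : f₁.1.val = f₀.1.val + 1 := hcon f₀ (hFO hf₀) f₁ (hFO hf₁) h01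
  have e21' : f₂.1.val = f₁.1.val + 1 := hcon f₁ (hFO hf₁) f₂ (hFO hf₂) h12
  exact run3_false E O hE hsub f₀ f₁ f₂ (hFO hf₀) (hFO hf₁) (hFO hf₂)
    e11 h01 (by omega) (by omega)


/-- if `E` contains no run of 3 consecutive edges, then at most 4
edges of a consecutive matching `O` in `E` overlap any given edge `e ∈ E`. -/
theorem overlap_bound_no_triples {n : ℕ} (hn : 1 ≤ n)
    (E : Finset (Fin n × Fin n)) (hE : NoRun E 3)
    (O : Finset (Fin n × Fin n)) (hO : ConsecMatching E O)
    (e : Fin n × Fin n) (he : e ∈ E) :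
    (O.filter (fun f => Overlap f e)).card ≤ 4 := by
  obtain ⟨hsub, hmatch, hcon1, hcon2⟩ := hO
  have hs : O.filter (fun f => Overlap f e) ⊆
      O.filter (fun f => ((f.1.val : ℤ) - e.1.val).natAbs ≤ 1) ∪
      O.filter (fun f => ((f.2.val : ℤ) - e.2.val).natAbs ≤ 1) := by
    intro f hf
    simp only [Finset.mem_filter, Finset.mem_union] at *
    rcases hf.2 with h | h
    · exact Or.inl ⟨hf.1, h⟩
    · exact Or.inr ⟨hf.1, h⟩
  have hA := sideA_bound E O hE hsub (fun f hf g hg hne => (hmatch f hf g hg hne).1)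
    hcon1 e.1.val
  have hB := sideB_bound E O hE hsub (fun f hf g hg hne => (hmatch f hf g hg hne).2)
    hcon2 e.2.val
  calc (O.filter (fun f => Overlap f e)).card
      ≤ _ := Finset.card_le_card hs
    _ ≤ _ := Finset.card_union_le _ _
    _ ≤ 4 := by omega
end

section
/- Let M be a 2-locally-optimal consecutive matching in E (in particular, no single edge can be added to M, and no edge of M can be exchanged for two new edges, while keeping a consecutive matching). Then for every consecutive matching O in E, the number of edges of O that overlap exactly one edge of M is at most |M|. -/
lemma overlap_self {n : ℕ} (e : Fin n × Fin n) : Overlap e e := by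
  unfold Overlap; omega

lemma not_overlap_facts {n : ℕ} {a b : Fin n × Fin n} (h : ¬ Overlap a b) :
    a.1 ≠ b.1 ∧ a.2 ≠ b.2 ∧ a.1.val ≠ b.1.val + 1 ∧ b.1.val ≠ a.1.val + 1 ∧
    a.2.val ≠ b.2.val + 1 ∧ b.2.val ≠ a.2.val + 1 := by
  unfold Overlap at h
  push_neg at h
  refine ⟨fun hh => ?_, fun hh => ?_, ?_, ?_, ?_, ?_⟩
  · have := congrArg Fin.val hh; omega
  · have := congrArg Fin.val hh; omega
  all_goals omega

/-- unions of compatible pieces of two consecutive matchings -/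
lemma union_consec {n : ℕ} (E M O : Finset (Fin n × Fin n))
    (hM : ConsecMatching E M) (hO : ConsecMatching E O)
    (A B : Finset (Fin n × Fin n)) (hA : A ⊆ O) (hB : B ⊆ M)
    (hcross : ∀ a ∈ A, ∀ b ∈ B, ¬ Overlap a b) :
    ConsecMatching E (B ∪ A) := by
  obtain ⟨hME, hMm, hM1, hM2⟩ := hM
  obtain ⟨hOE, hOm, hO1, hO2⟩ := hO
  refine ⟨?_, ?_, ?_, ?_⟩
  · intro x hx
    rcases Finset.mem_union.mp hx with h | h
    · exact hME (hB h)
    · exact hOE (hA h)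
  · intro x hx y hy hne
    rcases Finset.mem_union.mp hx with hx | hx <;> rcases Finset.mem_union.mp hy with hy | hy
    · exact hMm x (hB hx) y (hB hy) hne
    · have := not_overlap_facts (hcross y hy x hx)
      exact ⟨fun h => this.1 h.symm, fun h => this.2.1 h.symm⟩
    · have := not_overlap_facts (hcross x hx y hy)
      exact ⟨this.1, this.2.1⟩
    · exact hOm x (hA hx) y (hA hy) hne
  · intro x hx y hy hxy
    rcases Finset.mem_union.mp hx with hx | hx <;> rcases Finset.mem_union.mp hy with hy | hy
    · exact hM1 x (hB hx) y (hB hy) hxy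
    · have h := not_overlap_facts (hcross y hy x hx); omega
    · have h := not_overlap_facts (hcross x hx y hy); omega
    · exact hO1 x (hA hx) y (hA hy) hxy
  · intro x hx y hy hxy
    rcases Finset.mem_union.mp hx with hx | hx <;> rcases Finset.mem_union.mp hy with hy | hy
    · exact hM2 x (hB hx) y (hB hy) hxy
    · have h := not_overlap_facts (hcross y hy x hx); omega
    · have h := not_overlap_facts (hcross x hx y hy); omega
    · exact hO2 x (hA hx) y (hA hy) hxy

/-- for a 2-locally-optimal consecutive matching `M` in `E` and any
consecutive matching `O` in `E`, the number of edges of `O` that overlap exactly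
one edge of `M` is at most `|M|`. -/
theorem singly_overlapping_bound {n : ℕ} (hn : 1 ≤ n)
    (E M : Finset (Fin n × Fin n)) (hM : LocallyOptimal E M 2)
    (O : Finset (Fin n × Fin n)) (hO : ConsecMatching E O) :
    (O.filter (fun e => (M.filter (fun f => Overlap e f)).card = 1)).card
      ≤ M.card := by
  classical
  obtain ⟨hMcm, hopt⟩ := hM
  set S := O.filter (fun e => (M.filter (fun f => Overlap e f)).card = 1) with hSdef
  have hSO : S ⊆ O := Finset.filter_subset _ _
  have key : ∀ e ∈ S, ∃ f, f ∈ M ∧ Overlap e f ∧ ∀ g ∈ M, Overlap e g → g = f := by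
    intro e he
    rw [hSdef, Finset.mem_filter] at he
    obtain ⟨f, hf⟩ := Finset.card_eq_one.mp he.2
    have hfmem : f ∈ M.filter (fun g => Overlap e g) := hf ▸ Finset.mem_singleton_self f
    refine ⟨f, (Finset.mem_filter.mp hfmem).1, (Finset.mem_filter.mp hfmem).2, ?_⟩
    intro g hg hog
    have : g ∈ M.filter (fun g => Overlap e g) := Finset.mem_filter.mpr ⟨hg, hog⟩
    rw [hf, Finset.mem_singleton] at this
    exact this
  choose φ hφM hφov hφuniq using key
  refine Finset.card_le_card_of_injOn
    (fun e => if h : e ∈ S then φ e h else e) ?_ ?_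
  · intro e he
    simp only [dif_pos he]
    rw [dif_pos (show e ∈ S from he)]
    exact hφM e he
  · intro e he' e' he'' heq
    have he : e ∈ S := he'
    have he2 : e' ∈ S := he''
    simp only [dif_pos he, dif_pos he2] at heq
    by_contra hne
    -- the common unique overlapping edge
    set f := φ e he with hfdef
    have hf2ov : Overlap e' f := heq ▸ hφov e' he2
    have hf2uniq : ∀ g ∈ M, Overlap e' g → g = f := by
      intro g hg hog
      have := hφuniq e' he2 g hg hog
      rw [this, heq]
    have hfM : f ∈ M := hφM e he
    have heO : e ∈ O := hSO he
    have he2O : e' ∈ O := hSO he2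
    have heE : e ∈ E := hO.1 heO
    have he2E : e' ∈ E := hO.1 he2O
    -- the key consecutive matching
    have hclaim : ConsecMatching E ((M \ {f}) ∪ {e, e'}) := by
      refine union_consec E M O hMcm hO {e, e'} (M \ {f}) ?_ (Finset.sdiff_subset) ?_
      · intro x hx
        rcases Finset.mem_insert.mp hx with h | h
        · exact h ▸ heO
        · exact (Finset.mem_singleton.mp h) ▸ he2O
      · intro a ha b hb hover
        have hbM := (Finset.mem_sdiff.mp hb).1
        have hbf := (Finset.mem_sdiff.mp hb).2
        rcases Finset.mem_insert.mp ha with h | h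
        · exact hbf (Finset.mem_singleton.mpr (hφuniq e he b hbM (h ▸ hover)))
        · exact hbf (Finset.mem_singleton.mpr
            (hf2uniq b hbM ((Finset.mem_singleton.mp h) ▸ hover)))
    by_cases heM : e ∈ M
    · have hfe : f = e := (hφuniq e he e heM (overlap_self e)).symm
      by_cases he2M : e' ∈ M
      · exact hne (hfe.symm.trans (hf2uniq e' he2M (overlap_self e')).symm)
      · -- add e' alone
        refine hopt ⟨∅, {e'}, Finset.empty_subset _, ?_, ?_, ?_, ?_⟩
        · intro x hx
          rw [Finset.mem_singleton] at hx
          exact Finset.mem_sdiff.mpr ⟨hx ▸ he2E, hx ▸ he2M⟩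
        · simp
        · simp
        · have heqset : (M \ (∅ : Finset (Fin n × Fin n))) ∪ {e'}
              = (M \ {f}) ∪ {e, e'} := by
            rw [Finset.sdiff_empty]
            ext x
            simp only [Finset.mem_union, Finset.mem_sdiff, Finset.mem_insert,
              Finset.mem_singleton]
            constructor
            · rintro (hx | hx)
              · by_cases hxf : x = f
                · exact Or.inr (Or.inl (hxf.trans hfe))
                · exact Or.inl ⟨hx, hxf⟩
              · exact Or.inr (Or.inr hx)
            · rintro (⟨hx, _⟩ | hx | hx)
              · exact Or.inl hx
              · exact Or.inl (hx ▸ heM)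
              · exact Or.inr hx
          rw [heqset]
          exact hclaim
    · by_cases he2M : e' ∈ M
      · -- symmetric: f = e', add e alone
        have hfe : f = e' := (hf2uniq e' he2M (overlap_self e')).symm
        refine hopt ⟨∅, {e}, Finset.empty_subset _, ?_, ?_, ?_, ?_⟩
        · intro x hx
          rw [Finset.mem_singleton] at hx
          exact Finset.mem_sdiff.mpr ⟨hx ▸ heE, hx ▸ heM⟩
        · simp
        · simp
        · have heqset : (M \ (∅ : Finset (Fin n × Fin n))) ∪ {e}
              = (M \ {f}) ∪ {e, e'} := by
            rw [Finset.sdiff_empty]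
            ext x
            simp only [Finset.mem_union, Finset.mem_sdiff, Finset.mem_insert,
              Finset.mem_singleton]
            constructor
            · rintro (hx | hx)
              · by_cases hxf : x = f
                · exact Or.inr (Or.inr (hxf.trans hfe))
                · exact Or.inl ⟨hx, hxf⟩
              · exact Or.inr (Or.inl hx)
            · rintro (⟨hx, _⟩ | hx | hx)
              · exact Or.inl hx
              · exact Or.inr hx
              · exact Or.inl (hx ▸ he2M)
          rw [heqset]
          exact hclaim
      · -- both outside M: remove f, add {e, e'}
        refine hopt ⟨{f}, {e, e'}, Finset.singleton_subset_iff.mpr hfM, ?_, ?_, ?_, hclaim⟩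
        · intro x hx
          rcases Finset.mem_insert.mp hx with h | h
          · exact Finset.mem_sdiff.mpr ⟨h ▸ heE, h ▸ heM⟩
          · rw [Finset.mem_singleton] at h
            exact Finset.mem_sdiff.mpr ⟨h ▸ he2E, h ▸ he2M⟩
        · rw [Finset.card_singleton, Finset.card_insert_of_notMem
            (fun h => hne (Finset.mem_singleton.mp h)), Finset.card_singleton]
          omega
        · rw [Finset.card_insert_of_notMem
            (fun h => hne (Finset.mem_singleton.mp h)), Finset.card_singleton]
end

section
/- Let k ≥ 1 and t ≥ k. Suppose E contains no run of k consecutive edges, let ALG be a t-locally-optimal consecutive matching in E, let OPT be any consecutive matching in E, and let s = {(p+r, q+r) : 0 ≤ r < ℓ} be a streak of OPT whose balance equals −2. Then s has at least two gaps; writing r₁ and r₂ for the least and the greatest index r such that (p+r, q+r) is a gap of s, the prefix {(p+r, q+r) : 0 ≤ r ≤ r₁} has balance −1, the suffix {(p+r, q+r) : r₂ ≤ r < ℓ} has balance −1, and the middle part {(p+r, q+r) : r₁ < r < r₂} has balance 0. -/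
/-- The credit of the endpoint slot at node `v` on side A of an `ALG` edge is
transferred to the `OPT` edge `e`:  if some `OPT` edge has its A-endpoint at `v`,
that edge gets the credit; otherwise, if exactly one of `v-1`, `v+1` is the
A-endpoint of an `OPT` edge, that edge gets the credit. -/
def TransfersA {n : ℕ} (OPT : Finset (Fin n × Fin n)) (v : ℕ) (e : Fin n × Fin n) : Prop :=
  e.1.val = v ∨
  ((∀ f ∈ OPT, f.1.val ≠ v) ∧
    ((e.1.val + 1 = v ∧ ∀ f ∈ OPT, f.1.val ≠ v + 1) ∨
     (e.1.val = v + 1 ∧ ∀ f ∈ OPT, f.1.val + 1 ≠ v)))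

/-- Side-B analogue of `TransfersA`. -/
def TransfersB {n : ℕ} (OPT : Finset (Fin n × Fin n)) (v : ℕ) (e : Fin n × Fin n) : Prop :=
  e.2.val = v ∨
  ((∀ f ∈ OPT, f.2.val ≠ v) ∧
    ((e.2.val + 1 = v ∧ ∀ f ∈ OPT, f.2.val ≠ v + 1) ∨
     (e.2.val = v + 1 ∧ ∀ f ∈ OPT, f.2.val + 1 ≠ v)))

instance {n : ℕ} (OPT : Finset (Fin n × Fin n)) (v : ℕ) (e : Fin n × Fin n) :
    Decidable (TransfersA OPT v e) := by unfold TransfersA; infer_instance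

instance {n : ℕ} (OPT : Finset (Fin n × Fin n)) (v : ℕ) (e : Fin n × Fin n) :
    Decidable (TransfersB OPT v e) := by unfold TransfersB; infer_instance

/-- The number of endpoint slots of `ALG` edges whose credit is transferred to `e`. -/
def credits {n : ℕ} (ALG OPT : Finset (Fin n × Fin n)) (e : Fin n × Fin n) : ℕ :=
  (ALG.filter (fun a => TransfersA OPT a.1.val e)).card +
  (ALG.filter (fun a => TransfersB OPT a.2.val e)).card

/-- The balance of a set `S` of `OPT` edges: total credits received minus `|S|`. -/
def balance {n : ℕ} (ALG OPT S : Finset (Fin n × Fin n)) : ℤ :=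
  (∑ e ∈ S, (credits ALG OPT e : ℤ)) - S.card

/-- under the hypotheses of Statement 12, every streak
`s = {(p+r, q+r) : 0 ≤ r < ℓ}` of `OPT` with balance `-2` has at least two gaps,
and letting `e₁` and `e₂` be its first and last gaps, the prefix of `s` up to `e₁`
has balance `-1`, the suffix of `s` from `e₂` on has balance `-1`, and the middle
part strictly between `e₁` and `e₂` has balance `0`. -/
theorem balance_neg_two_split {n : ℕ} (hn : 1 ≤ n)
    (E : Finset (Fin n × Fin n)) (k t : ℕ) (hk : 1 ≤ k) (ht : k ≤ t)
    (hE : NoRun E k)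
    (ALG OPT : Finset (Fin n × Fin n))
    (hALG : LocallyOptimal E ALG t) (hOPT : ConsecMatching E OPT)
    (s : Finset (Fin n × Fin n)) (p q ℓ : ℕ) (hrun : IsRunAt s p q ℓ)
    (hs : IsStreak OPT s) (hbal : balance ALG OPT s = -2) :
    2 ≤ (s.filter (fun e => credits ALG OPT e = 0)).card ∧
    ∀ e₁ ∈ s, ∀ e₂ ∈ s,
      credits ALG OPT e₁ = 0 → credits ALG OPT e₂ = 0 →
      (∀ e ∈ s, credits ALG OPT e = 0 → e₁.1.val ≤ e.1.val) →
      (∀ e ∈ s, credits ALG OPT e = 0 → e.1.val ≤ e₂.1.val) →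
      balance ALG OPT (s.filter (fun e => e.1.val ≤ e₁.1.val)) = -1 ∧
      balance ALG OPT (s.filter (fun e => e₂.1.val ≤ e.1.val)) = -1 ∧
      balance ALG OPT (s.filter (fun e => e₁.1.val < e.1.val ∧ e.1.val < e₂.1.val)) = 0 := by
  
  classical
  obtain ⟨hpl, hql, hmem⟩ := hrun
  obtain ⟨hstreak_ex, hsOPT, hsmax⟩ := hs
  obtain ⟨hOE, hOdis, hOc1, hOc2⟩ := hOPT
  obtain ⟨⟨hAE, hAdis, hAc1, hAc2⟩, hopt⟩ := hALG
  have hn0 : 0 < n := hn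
  -- injectivity of first coordinate on s
  have hinj : ∀ e ∈ s, ∀ e' ∈ s, e.1.val = e'.1.val → e = e' := by
    intro e he e' he' hval
    obtain ⟨r, hr, h1, h2⟩ := (hmem e).1 he
    obtain ⟨r', hr', h1', h2'⟩ := (hmem e').1 he'
    have hfst : e.1 = e'.1 := Fin.val_injective (by omega)
    have hsnd : e.2 = e'.2 := Fin.val_injective (by omega)
    exact Prod.ext hfst hsnd
  have hcard : s.card ≤ ℓ := by
    have h := Finset.card_le_card_of_injOn (fun e : Fin n × Fin n => e.1.val - p)
      (t := Finset.range ℓ)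
      (fun e he => by
        obtain ⟨r, hr, h1, h2⟩ := (hmem e).1 he
        simp only [Finset.mem_coe, Finset.mem_range]
        omega)
      (fun e he e' he' hval => by
        obtain ⟨r, hr, h1, _⟩ := (hmem e).1 he
        obtain ⟨r', hr', h1', _⟩ := (hmem e').1 he'
        simp only at hval
        exact hinj e he e' he' (by omega))
    simpa using h
  have hlk : ℓ < k := by
    by_contra hcon
    push_neg at hcon
    apply hE
    refine ⟨s.filter (fun e => e.1.val < p + k), ⟨p, q, by omega, by omega, ?_⟩, ?_⟩
    · intro e
      constructor
      · intro he
        obtain ⟨hes, hlt⟩ := Finset.mem_filter.1 he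
        obtain ⟨r, hr, h1, h2⟩ := (hmem e).1 hes
        exact ⟨r, by omega, h1, h2⟩
      · rintro ⟨r, hr, h1, h2⟩
        exact Finset.mem_filter.2 ⟨(hmem e).2 ⟨r, by omega, h1, h2⟩, by omega⟩
    · exact (Finset.filter_subset _ _).trans (hsOPT.trans hOE)
  -- counting lemma
  have key : ∀ T : Finset (Fin n × Fin n),
      T.card ≤ (T.filter (fun e => credits ALG OPT e = 0)).card + ∑ e ∈ T, credits ALG OPT e := by
    intro T
    have h1 := Finset.card_filter_add_card_filter_not
      (s := T) (p := fun e => credits ALG OPT e = 0)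
    have h2 : (T.filter (fun e => ¬ credits ALG OPT e = 0)).card
        ≤ ∑ e ∈ T, credits ALG OPT e := by
      calc (T.filter (fun e => ¬ credits ALG OPT e = 0)).card
          = ∑ _e ∈ T.filter (fun e => ¬ credits ALG OPT e = 0), 1 := by simp
        _ ≤ ∑ e ∈ T.filter (fun e => ¬ credits ALG OPT e = 0), credits ALG OPT e := by
            apply Finset.sum_le_sum
            intro e he
            have := (Finset.mem_filter.1 he).2
            omega
        _ ≤ ∑ e ∈ T, credits ALG OPT e :=
            Finset.sum_le_sum_of_subset (Finset.filter_subset _ _)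
    omega
  have hsum_s : (∑ e ∈ s, (credits ALG OPT e : ℤ)) = (s.card : ℤ) - 2 := by
    unfold balance at hbal
    linarith
  have hgaps2 : 2 ≤ (s.filter (fun e => credits ALG OPT e = 0)).card := by
    have hk2 := key s
    have hcast : ((∑ e ∈ s, credits ALG OPT e : ℕ) : ℤ) = ∑ e ∈ s, (credits ALG OPT e : ℤ) :=
      Nat.cast_sum _ _
    have h2 : ((∑ e ∈ s, credits ALG OPT e : ℕ) : ℤ) = (s.card : ℤ) - 2 := by
      rw [hcast, hsum_s]
    omega
  have hzero : ∀ e, credits ALG OPT e = 0 →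
      (∀ f ∈ ALG, f.1.val ≠ e.1.val) ∧ (∀ f ∈ ALG, f.2.val ≠ e.2.val) := by
    intro e hce
    unfold credits at hce
    have h1 : (ALG.filter (fun a => TransfersA OPT a.1.val e)).card = 0 := by omega
    have h2 : (ALG.filter (fun a => TransfersB OPT a.2.val e)).card = 0 := by omega
    rw [Finset.card_eq_zero, Finset.filter_eq_empty_iff] at h1 h2
    constructor
    · intro f hf hval
      exact h1 hf (Or.inl hval.symm)
    · intro f hf hval
      exact h2 hf (Or.inl hval.symm)
  refine ⟨hgaps2, ?_⟩
  intro e₁ he₁ e₂ he₂ hcz₁ hcz₂ hmin hmax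
  obtain ⟨ra, hralt, ha1, ha2⟩ := (hmem e₁).1 he₁
  obtain ⟨rb, hrblt, hb1, hb2⟩ := (hmem e₂).1 he₂
  obtain ⟨hA₁, hB₁⟩ := hzero e₁ hcz₁
  obtain ⟨hA₂, hB₂⟩ := hzero e₂ hcz₂
  -- e₁ is strictly left of e₂
  have hab : e₁.1.val < e₂.1.val := by
    obtain ⟨g₁, hg₁, g₂, hg₂, hgne⟩ := Finset.one_lt_card.1 (by omega : 1 < (s.filter (fun e => credits ALG OPT e = 0)).card)
    obtain ⟨hg₁s, hg₁c⟩ := Finset.mem_filter.1 hg₁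
    obtain ⟨hg₂s, hg₂c⟩ := Finset.mem_filter.1 hg₂
    have h₁ := hmin g₁ hg₁s hg₁c
    have h₂ := hmin g₂ hg₂s hg₂c
    have h₃ := hmax g₁ hg₁s hg₁c
    have h₄ := hmax g₂ hg₂s hg₂c
    have hne : g₁.1.val ≠ g₂.1.val := fun h => hgne (hinj g₁ hg₁s g₂ hg₂s h)
    omega
  set P := s.filter (fun e => e.1.val ≤ e₁.1.val) with hPdef
  set Mm := s.filter (fun e => e₁.1.val < e.1.val ∧ e.1.val < e₂.1.val) with hMdef
  set Sf := s.filter (fun e => e₂.1.val ≤ e.1.val) with hSdef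
  have hMfacts : ∀ x ∈ Mm, x ∈ OPT ∧ e₁.1.val < x.1.val ∧ x.1.val < e₂.1.val ∧
      e₁.2.val < x.2.val ∧ x.2.val < e₂.2.val := by
    intro x hx
    rw [hMdef] at hx
    obtain ⟨hxs, hx1, hx2⟩ := Finset.mem_filter.1 hx
    obtain ⟨r, hr, hv1, hv2⟩ := (hmem x).1 hxs
    exact ⟨hsOPT hxs, hx1, hx2, by omega, by omega⟩
  have hd1 : Disjoint P Mm := by
    rw [Finset.disjoint_left]
    intro x hxP hxM
    rw [hPdef] at hxP
    rw [hMdef] at hxM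
    have h1 := (Finset.mem_filter.1 hxP).2
    have h2 := (Finset.mem_filter.1 hxM).2
    omega
  have hd2 : Disjoint (P ∪ Mm) Sf := by
    rw [Finset.disjoint_left]
    intro x hx hxS
    rw [hSdef] at hxS
    have hS' := (Finset.mem_filter.1 hxS).2
    rcases Finset.mem_union.1 hx with h | h
    · rw [hPdef] at h
      have := (Finset.mem_filter.1 h).2
      omega
    · rw [hMdef] at h
      have := (Finset.mem_filter.1 h).2
      omega
  have hunion : P ∪ Mm ∪ Sf = s := by
    ext x
    simp only [Finset.mem_union, hPdef, hMdef, hSdef, Finset.mem_filter]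
    constructor
    · rintro ((⟨h, _⟩ | ⟨h, _⟩) | ⟨h, _⟩) <;> exact h
    · intro hx
      by_cases h1 : x.1.val ≤ e₁.1.val
      · exact Or.inl (Or.inl ⟨hx, h1⟩)
      · by_cases h2 : x.1.val < e₂.1.val
        · exact Or.inl (Or.inr ⟨hx, by omega, h2⟩)
        · exact Or.inr ⟨hx, by omega⟩
  have hadd : ∀ T₁ T₂ : Finset (Fin n × Fin n), Disjoint T₁ T₂ →
      balance ALG OPT (T₁ ∪ T₂) = balance ALG OPT T₁ + balance ALG OPT T₂ := by
    intro T₁ T₂ hT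
    unfold balance
    rw [Finset.sum_union hT, Finset.card_union_of_disjoint hT]
    push_cast
    ring
  have hsplit : balance ALG OPT P + balance ALG OPT Mm + balance ALG OPT Sf = -2 := by
    have h1 := hadd _ _ hd2
    rw [hunion] at h1
    rw [hadd _ _ hd1] at h1
    linarith [hbal, h1]
  -- prefix bound
  have hgP : P.filter (fun e => credits ALG OPT e = 0) = {e₁} := by
    ext x
    simp only [hPdef, Finset.mem_filter, Finset.mem_singleton]
    constructor
    · rintro ⟨⟨hxs, hxle⟩, hxc⟩
      exact hinj x hxs e₁ he₁ (by have := hmin x hxs hxc; omega)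
    · rintro rfl
      exact ⟨⟨he₁, le_refl _⟩, hcz₁⟩
  have hbP : -1 ≤ balance ALG OPT P := by
    have hk2 := key P
    rw [hgP, Finset.card_singleton] at hk2
    unfold balance
    have hle := (Nat.cast_le (α := ℤ)).2 hk2
    push_cast at hle
    linarith
  -- suffix bound
  have hgS : Sf.filter (fun e => credits ALG OPT e = 0) = {e₂} := by
    ext x
    simp only [hSdef, Finset.mem_filter, Finset.mem_singleton]
    constructor
    · rintro ⟨⟨hxs, hxle⟩, hxc⟩
      exact hinj x hxs e₂ he₂ (by have := hmax x hxs hxc; omega)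
    · rintro rfl
      exact ⟨⟨he₂, le_refl _⟩, hcz₂⟩
  have hbS : -1 ≤ balance ALG OPT Sf := by
    have hk2 := key Sf
    rw [hgS, Finset.card_singleton] at hk2
    unfold balance
    have hle := (Nat.cast_le (α := ℤ)).2 hk2
    push_cast at hle
    linarith
  -- middle bound via the exchange argument
  have hbM : 0 ≤ balance ALG OPT Mm := by
    set A := ALG.filter (fun f => e₁.1.val < f.1.val ∧ f.1.val < e₂.1.val) with hAsdef
    set B := ALG.filter (fun f => e₁.2.val < f.2.val ∧ f.2.val < e₂.2.val) with hBsdef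
    set Eadd := Mm \ ALG with hEaddDef
    set Erem := (A ∪ B) \ Mm with hEremDef
    have hCM : ConsecMatching E ((ALG \ Erem) ∪ Eadd) := by
      have hout : ∀ x ∈ (ALG \ Erem) ∪ Eadd, x ∈ Mm ∨ (x ∈ ALG ∧
          (x.1.val < e₁.1.val ∨ e₂.1.val < x.1.val) ∧
          (x.2.val < e₁.2.val ∨ e₂.2.val < x.2.val)) := by
        intro x hx
        rcases Finset.mem_union.1 hx with hx | hx
        · obtain ⟨hxA, hxR⟩ := Finset.mem_sdiff.1 hx
          by_cases hxM : x ∈ Mm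
          · exact Or.inl hxM
          · right
            have hxAB : x ∉ A ∪ B := fun h => hxR (Finset.mem_sdiff.2 ⟨h, hxM⟩)
            have hxA' : ¬ (e₁.1.val < x.1.val ∧ x.1.val < e₂.1.val) := fun h =>
              hxAB (Finset.mem_union_left _ (Finset.mem_filter.2 ⟨hxA, h⟩))
            have hxB' : ¬ (e₁.2.val < x.2.val ∧ x.2.val < e₂.2.val) := fun h =>
              hxAB (Finset.mem_union_right _ (Finset.mem_filter.2 ⟨hxA, h⟩))
            have h1 := hA₁ x hxA
            have h2 := hA₂ x hxA
            have h3 := hB₁ x hxA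
            have h4 := hB₂ x hxA
            exact ⟨hxA, by omega, by omega⟩
        · exact Or.inl (Finset.mem_sdiff.1 hx).1
      refine ⟨?_, ?_, ?_, ?_⟩
      · refine Finset.union_subset ((Finset.sdiff_subset).trans hAE) ?_
        intro x hx
        have hxM := (Finset.mem_sdiff.1 hx).1
        exact hOE (hMfacts x hxM).1
      · intro x hx y hy hxy
        rcases hout x hx with hxM | ⟨hxA, hxr1, hxr2⟩
        · rcases hout y hy with hyM | ⟨hyA, hyr1, hyr2⟩
          · exact hOdis x (hMfacts x hxM).1 y (hMfacts y hyM).1 hxy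
          · obtain ⟨_, u1, u2, u3, u4⟩ := hMfacts x hxM
            exact ⟨Fin.ne_of_val_ne (by omega), Fin.ne_of_val_ne (by omega)⟩
        · rcases hout y hy with hyM | ⟨hyA, hyr1, hyr2⟩
          · obtain ⟨_, u1, u2, u3, u4⟩ := hMfacts y hyM
            exact ⟨Fin.ne_of_val_ne (by omega), Fin.ne_of_val_ne (by omega)⟩
          · exact hAdis x hxA y hyA hxy
      · intro x hx y hy hsucc
        rcases hout x hx with hxM | ⟨hxA, hxr1, hxr2⟩
        · rcases hout y hy with hyM | ⟨hyA, hyr1, hyr2⟩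
          · exact hOc1 x (hMfacts x hxM).1 y (hMfacts y hyM).1 hsucc
          · obtain ⟨_, u1, u2, u3, u4⟩ := hMfacts x hxM
            omega
        · rcases hout y hy with hyM | ⟨hyA, hyr1, hyr2⟩
          · obtain ⟨_, u1, u2, u3, u4⟩ := hMfacts y hyM
            omega
          · exact hAc1 x hxA y hyA hsucc
      · intro x hx y hy hsucc
        rcases hout x hx with hxM | ⟨hxA, hxr1, hxr2⟩
        · rcases hout y hy with hyM | ⟨hyA, hyr1, hyr2⟩
          · exact hOc2 x (hMfacts x hxM).1 y (hMfacts y hyM).1 hsucc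
          · obtain ⟨_, u1, u2, u3, u4⟩ := hMfacts x hxM
            omega
        · rcases hout y hy with hyM | ⟨hyA, hyr1, hyr2⟩
          · obtain ⟨_, u1, u2, u3, u4⟩ := hMfacts y hyM
            omega
          · exact hAc2 x hxA y hyA hsucc
    have hEremALG : Erem ⊆ ALG := by
      intro x hx
      rcases Finset.mem_union.1 (Finset.mem_sdiff.1 hx).1 with h | h
      · exact (Finset.mem_filter.1 h).1
      · exact (Finset.mem_filter.1 h).1
    have hEaddE : Eadd ⊆ E \ ALG := by
      intro x hx
      obtain ⟨hxM, hxA⟩ := Finset.mem_sdiff.1 hx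
      exact Finset.mem_sdiff.2 ⟨hOE (hMfacts x hxM).1, hxA⟩
    have hMmsub : Mm ⊆ s := by
      rw [hMdef]; exact Finset.filter_subset _ _
    have hEaddt : Eadd.card ≤ t := by
      have h1 : Eadd ⊆ s := fun x hx => hMmsub (Finset.mem_sdiff.1 hx).1
      have := Finset.card_le_card h1
      omega
    have hnoimp : Eadd.card ≤ Erem.card := by
      by_contra hcon
      push_neg at hcon
      exact hopt ⟨Erem, Eadd, hEremALG, hEaddE, hcon, hEaddt, hCM⟩
    have hDA : Mm ∩ ALG ⊆ A := by
      intro x hx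
      obtain ⟨hxM, hxA⟩ := Finset.mem_inter.1 hx
      obtain ⟨_, u1, u2, _, _⟩ := hMfacts x hxM
      exact Finset.mem_filter.2 ⟨hxA, u1, u2⟩
    have hABM : (A ∪ B) ∩ Mm = Mm ∩ ALG := by
      ext x
      simp only [Finset.mem_inter, Finset.mem_union]
      constructor
      · rintro ⟨h | h, hxM⟩
        · exact ⟨hxM, (Finset.mem_filter.1 h).1⟩
        · exact ⟨hxM, (Finset.mem_filter.1 h).1⟩
      · rintro ⟨hxM, hxA⟩
        exact ⟨Or.inl (hDA (Finset.mem_inter.2 ⟨hxM, hxA⟩)), hxM⟩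
    have hc1 : Erem.card + (Mm ∩ ALG).card = (A ∪ B).card := by
      rw [← hABM]
      exact Finset.card_sdiff_add_card_inter _ _
    have hc2 : Eadd.card + (Mm ∩ ALG).card = Mm.card :=
      Finset.card_sdiff_add_card_inter _ _
    have hc3 : (A ∪ B).card ≤ A.card + B.card := Finset.card_union_le _ _
    have hAcount : A.card ≤ ∑ e ∈ Mm, (ALG.filter (fun f => TransfersA OPT f.1.val e)).card := by
      have hφmem : ∀ f ∈ A, ((f.1, (⟨(q + (f.1.val - p)) % n, Nat.mod_lt _ hn0⟩ : Fin n)) :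
          Fin n × Fin n) ∈ Mm := by
        intro f hf
        rw [hAsdef] at hf
        obtain ⟨hfA, hr1, hr2⟩ := Finset.mem_filter.1 hf
        have h2v : (q + (f.1.val - p)) % n = q + (f.1.val - p) := Nat.mod_eq_of_lt (by omega)
        have hfp : f.1.val = p + (f.1.val - p) := by omega
        have hrl : f.1.val - p < ℓ := by omega
        have hmemx : ((f.1, (⟨(q + (f.1.val - p)) % n, Nat.mod_lt _ hn0⟩ : Fin n)) :
            Fin n × Fin n) ∈ s :=
          (hmem _).2 ⟨f.1.val - p, hrl, hfp, h2v⟩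
        rw [hMdef]
        exact Finset.mem_filter.2 ⟨hmemx, hr1, hr2⟩
      rw [Finset.card_eq_sum_card_fiberwise hφmem]
      apply Finset.sum_le_sum
      intro e he
      apply Finset.card_le_card
      intro f hf
      obtain ⟨hfA, hfe⟩ := Finset.mem_filter.1 hf
      have hfALG : f ∈ ALG := by
        rw [hAsdef] at hfA
        exact (Finset.mem_filter.1 hfA).1
      refine Finset.mem_filter.2 ⟨hfALG, Or.inl ?_⟩
      rw [← hfe]
    have hBcount : B.card ≤ ∑ e ∈ Mm, (ALG.filter (fun f => TransfersB OPT f.2.val e)).card := by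
      have hψmem : ∀ f ∈ B, (((⟨(p + (f.2.val - q)) % n, Nat.mod_lt _ hn0⟩ : Fin n), f.2) :
          Fin n × Fin n) ∈ Mm := by
        intro f hf
        rw [hBsdef] at hf
        obtain ⟨hfA, hr1, hr2⟩ := Finset.mem_filter.1 hf
        have h1v : (p + (f.2.val - q)) % n = p + (f.2.val - q) := Nat.mod_eq_of_lt (by omega)
        have hfq : f.2.val = q + (f.2.val - q) := by omega
        have hrl : f.2.val - q < ℓ := by omega
        have hmemx : (((⟨(p + (f.2.val - q)) % n, Nat.mod_lt _ hn0⟩ : Fin n), f.2) :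
            Fin n × Fin n) ∈ s :=
          (hmem _).2 ⟨f.2.val - q, hrl, h1v, hfq⟩
        rw [hMdef]
        refine Finset.mem_filter.2 ⟨hmemx, ?_, ?_⟩
        · show e₁.1.val < (p + (f.2.val - q)) % n
          rw [h1v]; omega
        · show (p + (f.2.val - q)) % n < e₂.1.val
          rw [h1v]; omega
      rw [Finset.card_eq_sum_card_fiberwise hψmem]
      apply Finset.sum_le_sum
      intro e he
      apply Finset.card_le_card
      intro f hf
      obtain ⟨hfA, hfe⟩ := Finset.mem_filter.1 hf
      have hfALG : f ∈ ALG := by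
        rw [hBsdef] at hfA
        exact (Finset.mem_filter.1 hfA).1
      refine Finset.mem_filter.2 ⟨hfALG, Or.inl ?_⟩
      rw [← hfe]
    have hsumc : ∑ e ∈ Mm, credits ALG OPT e =
        (∑ e ∈ Mm, (ALG.filter (fun f => TransfersA OPT f.1.val e)).card) +
        (∑ e ∈ Mm, (ALG.filter (fun f => TransfersB OPT f.2.val e)).card) := by
      unfold credits
      exact Finset.sum_add_distrib
    have hfinal : Mm.card ≤ ∑ e ∈ Mm, credits ALG OPT e := by omega
    unfold balance
    have hle := (Nat.cast_le (α := ℤ)).2 hfinal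
    push_cast at hle
    linarith
  exact ⟨by linarith, by linarith, by linarith⟩
end
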